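/- arXiv:2212.01299 — 6 statements merged into one kernel-verified Lean document; each statement's English description precedes it below -/
import Mathlib

section
/- For each integer j ≥ 5, the set of congruence classes consisting of 2^{i-1} mod 2^i for i = 1, ..., j-3, together with the three classes (k mod 3) ∩ (0 mod 2^{j-5+k}) for k = 0, 1, 2 (each intersection being a single congruence class modulo 3·2^{j-5+k}), covers the integers: every integer lies in at least one of these classes. -/
lemma stmt0_aux (m : ℕ) (n : ℤ) :
    (2 ^ m : ℤ) ∣ n ∨ ∃ i : ℕ, 1 ≤ i ∧ i ≤ m ∧ n ≡ 2 ^ (i - 1) [ZMOD 2 ^ i] := by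
  induction m with
  | zero => exact Or.inl (by simpa using one_dvd n)
  | succ m ih =>
    rcases ih with ⟨q, hq⟩ | ⟨i, h1, h2, h3⟩
    · rcases Int.even_or_odd q with ⟨t, ht⟩ | ⟨t, ht⟩
      · left
        exact ⟨t, by rw [hq, ht]; ring⟩
      · right
        refine ⟨m + 1, Nat.le_add_left 1 m, le_refl _, ?_⟩
        have : n ≡ 2 ^ m [ZMOD 2 ^ (m + 1)] := by
          rw [Int.modEq_iff_dvd]
          exact ⟨-t, by rw [hq, ht]; ring⟩
        simpa using this
    · exact Or.inr ⟨i, h1, h2.trans (Nat.le_succ m), h3⟩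

/-- For each `j ≥ 5`, the congruence classes `2^(i-1) mod 2^i` for `i = 1, ..., j-3`,
together with the three classes `(k mod 3) ∩ (0 mod 2^(j-5+k))` for `k = 0, 1, 2`,
cover the integers. -/
theorem stmt0 (j : ℕ) (hj : 5 ≤ j) (n : ℤ) :
    (∃ i : ℕ, 1 ≤ i ∧ i ≤ j - 3 ∧ n ≡ 2 ^ (i - 1) [ZMOD 2 ^ i]) ∨
    (∃ k : ℕ, k ≤ 2 ∧ n ≡ (k : ℤ) [ZMOD 3] ∧ n ≡ 0 [ZMOD 2 ^ (j - 5 + k)]) := by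
  rcases stmt0_aux (j - 3) n with hdvd | ⟨i, h1, h2, h3⟩
  · right
    set k : ℕ := (n % 3).toNat with hk
    have hnn : 0 ≤ n % 3 := Int.emod_nonneg n (by norm_num)
    have hlt : n % 3 < 3 := Int.emod_lt_of_pos n (by norm_num)
    have hkc : (k : ℤ) = n % 3 := Int.toNat_of_nonneg hnn
    refine ⟨k, ?_, ?_, ?_⟩
    · omega
    · show n % 3 = (k : ℤ) % 3
      rw [hkc, Int.emod_emod_of_dvd _ dvd_rfl]
    · rw [Int.modEq_zero_iff_dvd]
      refine dvd_trans (pow_dvd_pow (2 : ℤ) ?_) hdvd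
      omega
  · exact Or.inl ⟨i, h1, h2, h3⟩
end

section
/- For each integer j ≥ 5, the covering system consisting of 2^{i-1} mod 2^i for i = 1, ..., j-3, together with the classes A_k = (k mod 3) ∩ (0 mod 2^{j-5+k}) for k = 0, 1, 2, is minimal: no proper subset of these congruence classes covers ℤ. -/
private lemma two_pow_dvd_cancel {c : ℤ} {e m : ℕ} (hc : c % 2 = 1) (h : e < m)
    (hdvd : (2:ℤ)^m ∣ 2^e * c) : False := by
  have h1 : (2:ℤ)^(e+1) ∣ 2^e * c := dvd_trans (pow_dvd_pow 2 h) hdvd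
  rw [pow_succ] at h1
  have h2 : (2:ℤ) ∣ c := (mul_dvd_mul_iff_left (pow_ne_zero e two_ne_zero)).mp h1
  omega

private lemma not_mem_B {n : ℤ} {i : ℕ} (hi : 1 ≤ i) (hdvd : (2:ℤ)^i ∣ n)
    (h : n ≡ 2^(i-1) [ZMOD 2^i]) : False := by
  have h1 : (2:ℤ)^i ∣ 2^(i-1) - n := Int.ModEq.dvd h
  have h2 : (2:ℤ)^i ∣ 2^(i-1) := by
    have := dvd_add h1 hdvd
    simpa using this
  have h3 : (2:ℤ)^i ≤ 2^(i-1) := Int.le_of_dvd (by positivity) h2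
  have h4 : (2:ℤ)^(i-1) < 2^i := by
    apply pow_lt_pow_right₀ (by norm_num) (by omega)
  omega

private lemma three_dvd_four_pow_sub_one (m : ℕ) : (3:ℤ) ∣ 4^m - 1 := by
  have h : (4:ℤ)^m ≡ 1^m [ZMOD 3] := Int.ModEq.pow m (by decide)
  have := Int.ModEq.dvd h
  simp only [one_pow] at this
  omega

/-- For each `j ≥ 5`, the covering system consisting of the classes
`2^(i-1) mod 2^i` for `i = 1, ..., j-3` together with
`A_k = (k mod 3) ∩ (0 mod 2^(j-5+k))` for `k = 0, 1, 2` is minimal: no proper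
subset of this set of congruence classes covers `ℤ`. -/
theorem stmt1 (j : ℕ) (hj : 5 ≤ j)
    (C : Set (Set ℤ))
    (hC : C = {S | ∃ i : ℕ, 1 ≤ i ∧ i ≤ j - 3 ∧
                S = {n : ℤ | n ≡ 2 ^ (i - 1) [ZMOD 2 ^ i]}} ∪
              {S | ∃ k : ℕ, k ≤ 2 ∧
                S = {n : ℤ | n ≡ (k : ℤ) [ZMOD 3] ∧ n ≡ 0 [ZMOD 2 ^ (j - 5 + k)]}}) :
    ∀ T ⊂ C, ⋃₀ T ≠ Set.univ := by
  intro T hT hcov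
  obtain ⟨S, hSC, hST⟩ := Set.exists_of_ssubset hT
  have key : ∃ n : ℤ, ∀ S' ∈ C, n ∈ S' → S' = S := by
    rw [hC] at hSC
    rcases hSC with ⟨i, hi1, hi3, rfl⟩ | ⟨k, hk, rfl⟩
    · -- S is the class 2^(i-1) mod 2^i; witness n = 2^(i-1) * (2^i + 3)
      refine ⟨2^(i-1) * (2^i + 3), ?_⟩
      have hcod : ((2:ℤ)^i + 3) % 2 = 1 := by
        have : (2:ℤ) ∣ 2^i := dvd_pow_self 2 (by omega)
        omega
      -- n ≡ 2 mod 3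
      have hm3 : (3:ℤ) ∣ 2^(i-1) * (2^i + 3) - 2 := by
        obtain ⟨d, hd⟩ := three_dvd_four_pow_sub_one (i-1)
        have hexp : (2:ℤ)^(i-1) * 2^i = 2 * 4^(i-1) := by
          rw [← pow_add, show i - 1 + i = 2*(i-1)+1 from by omega, pow_succ, pow_mul]
          norm_num [mul_comm]
        refine ⟨2*d + 2^(i-1), ?_⟩
        have : (2:ℤ)^(i-1) * (2^i + 3) = 2 * 4^(i-1) + 3 * 2^(i-1) := by
          rw [mul_add, hexp]; ring
        rw [this]
        linear_combination 2 * hd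
      intro S' hS' hn
      rw [hC] at hS'
      rcases hS' with ⟨i', hi'1, hi'3, rfl⟩ | ⟨k', hk', rfl⟩
      · simp only [Set.mem_setOf_eq] at hn
        rcases lt_trichotomy i' i with h | h | h
        · exact absurd hn (fun hn => not_mem_B hi'1
            (dvd_mul_of_dvd_left (pow_dvd_pow 2 (by omega)) _) hn)
        · rw [h]
        · exfalso
          have h1 : (2:ℤ)^i' ∣ 2^(i'-1) - 2^(i-1) * (2^i + 3) := Int.ModEq.dvd hn
          have h2 : (2:ℤ)^i ∣ 2^(i'-1) - 2^(i-1) * (2^i + 3) :=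
            dvd_trans (pow_dvd_pow 2 (by omega)) h1
          have h3 : (2:ℤ)^i ∣ 2^(i'-1) := pow_dvd_pow 2 (by omega)
          have h4 : (2:ℤ)^i ∣ 2^(i-1) * (2^i + 3) := by
            have := dvd_sub h3 h2
            simpa using this
          exact two_pow_dvd_cancel hcod (by omega) h4
      · exfalso
        simp only [Set.mem_setOf_eq] at hn
        obtain ⟨hn3, hn2⟩ := hn
        have hd3 := Int.ModEq.dvd hn3
        interval_cases k'
        · simp only [Nat.cast_zero] at hd3; omega
        · simp only [Nat.cast_one] at hd3; omega
        · have : (2:ℤ)^(j-5+2) ∣ 2^(i-1) * (2^i + 3) := by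
            have h0 := Int.ModEq.dvd hn2
            rw [zero_sub] at h0
            exact dvd_neg.mp h0
          exact two_pow_dvd_cancel hcod (by omega) this
    · -- S is A_k; witness n = k * 4^(j-3)
      refine ⟨(k:ℤ) * 4^(j-3), ?_⟩
      have h4 : (4:ℤ)^(j-3) = 2^(2*(j-3)) := by rw [pow_mul]; norm_num
      intro S' hS' hn
      rw [hC] at hS'
      rcases hS' with ⟨i', hi'1, hi'3, rfl⟩ | ⟨k', hk', rfl⟩
      · exfalso
        simp only [Set.mem_setOf_eq] at hn
        have hdvd : (2:ℤ)^i' ∣ (k:ℤ) * 4^(j-3) := by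
          rw [h4]
          exact Dvd.dvd.mul_left (pow_dvd_pow 2 (by omega)) _
        exact not_mem_B hi'1 hdvd hn
      · simp only [Set.mem_setOf_eq] at hn
        obtain ⟨hn3, _⟩ := hn
        have hkk : (3:ℤ) ∣ (k:ℤ) * 4^(j-3) - k := by
          obtain ⟨d, hd⟩ := three_dvd_four_pow_sub_one (j-3)
          exact ⟨k * d, by linear_combination (k:ℤ) * hd⟩
        have hd3 := Int.ModEq.dvd hn3
        have : k' = k := by omega
        rw [this]
  obtain ⟨n, hkey⟩ := key
  have hn : n ∈ ⋃₀ T := hcov ▸ Set.mem_univ n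
  obtain ⟨S', hS'T, hnS'⟩ := hn
  exact hST ((hkey S' (hT.subset hS'T) hnS') ▸ hS'T)
end

section
/- Suppose C = {r_1 mod q_1, ..., r_k mod q_k} is a minimal covering system of ℤ and 1 ≤ ℓ ≤ k. Assume the following property (Crittenden–Vanden Eynden): any collection of ℓ-1 arithmetic progressions that covers some interval of 2^{ℓ-1} consecutive integers covers all of ℤ. Then the set of congruence classes C_ℓ = {r_j - h mod q_j : ℓ ≤ j ≤ k, 0 ≤ h < 2^{ℓ-1}} is a covering system of ℤ. -/
/-- If `C = {r_i mod q_i : 1 ≤ i ≤ k}` is a minimal covering system of `ℤ` and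
`1 ≤ ℓ ≤ k`, then—assuming the Crittenden–Vanden Eynden property that any `ℓ-1`
arithmetic progressions covering an interval of `2^(ℓ-1)` consecutive integers
cover all of `ℤ`—the system
`C_ℓ = {r_i - h mod q_i : ℓ ≤ i ≤ k, 0 ≤ h < 2^(ℓ-1)}` covers `ℤ`. -/
theorem stmt3 (k : ℕ) (hk : 1 ≤ k) (q : ℕ → ℕ) (r : ℕ → ℤ)
    (hq : ∀ i ∈ Finset.Icc 1 k, 0 < q i)
    -- `C` is a covering system:
    (hcover : ∀ n : ℤ, ∃ i ∈ Finset.Icc 1 k, n ≡ r i [ZMOD q i])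
    -- `C` is minimal: no proper subset of the congruence classes covers `ℤ`:
    (hmin : ∀ S ⊆ Finset.Icc 1 k, S ≠ Finset.Icc 1 k →
      ∃ n : ℤ, ∀ i ∈ S, ¬ n ≡ r i [ZMOD q i])
    (ℓ : ℕ) (hℓ : 1 ≤ ℓ) (hℓk : ℓ ≤ k)
    -- Crittenden–Vanden Eynden: any collection of `ℓ-1` arithmetic progressions
    -- covering an interval of `2^(ℓ-1)` consecutive integers covers `ℤ`:
    (hCVE : ∀ (a : ℕ → ℤ) (d : ℕ → ℕ), (∀ i ∈ Finset.Icc 1 (ℓ - 1), 0 < d i) →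
      (∃ m : ℤ, ∀ x ∈ Finset.Ico m (m + 2 ^ (ℓ - 1)),
        ∃ i ∈ Finset.Icc 1 (ℓ - 1), x ≡ a i [ZMOD d i]) →
      ∀ n : ℤ, ∃ i ∈ Finset.Icc 1 (ℓ - 1), n ≡ a i [ZMOD d i]) :
    ∀ n : ℤ, ∃ i ∈ Finset.Icc ℓ k, ∃ h ∈ Finset.Ico 0 (2 ^ (ℓ - 1) : ℤ),
      n ≡ r i - h [ZMOD q i] := by
  by_contra hcon
  push_neg at hcon
  obtain ⟨n, hn⟩ := hcon
  have hsub : Finset.Icc 1 (ℓ - 1) ⊆ Finset.Icc 1 k := by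
    apply Finset.Icc_subset_Icc_right
    omega
  -- The small system covers an interval of length 2^(ℓ-1), hence all of ℤ.
  have hsmall : ∀ m : ℤ, ∃ i ∈ Finset.Icc 1 (ℓ - 1), m ≡ r i [ZMOD q i] := by
    apply hCVE r q (fun i hi => hq i (hsub hi))
    refine ⟨n, fun x hx => ?_⟩
    simp only [Finset.mem_Ico] at hx
    obtain ⟨i, hi, hxi⟩ := hcover x
    simp only [Finset.mem_Icc] at hi
    by_cases hiℓ : i ≤ ℓ - 1
    · exact ⟨i, Finset.mem_Icc.mpr ⟨hi.1, hiℓ⟩, hxi⟩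
    · exfalso
      have hil : ℓ ≤ i := by omega
      have hmem : i ∈ Finset.Icc ℓ k := Finset.mem_Icc.mpr ⟨hil, hi.2⟩
      have hh : x - n ∈ Finset.Ico (0 : ℤ) (2 ^ (ℓ - 1)) := by
        simp only [Finset.mem_Ico]
        omega
      apply hn i hmem (x - n) hh
      have h2 := hxi.sub_right (x - n)
      have h3 : x - (x - n) = n := by ring
      rwa [h3] at h2
  -- Contradict minimality.
  have hne : Finset.Icc 1 (ℓ - 1) ≠ Finset.Icc 1 k := by
    intro h
    have hkmem : k ∈ Finset.Icc 1 k := Finset.mem_Icc.mpr ⟨hk, le_refl k⟩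
    rw [← h] at hkmem
    simp only [Finset.mem_Icc] at hkmem
    omega
  obtain ⟨m, hm⟩ := hmin _ hsub hne
  obtain ⟨i, hi, hmi⟩ := hsmall m
  exact hm i hi hmi
end

section
/- There is an absolute constant K such that for every positive integer Q whose prime factors are all at most y (with y ≥ 2), the sum over pairs of divisors g_1, g_2 of Q of 2^{ω(lcm(g_1,g_2))} / lcm(g_1, g_2) is at most K · (log y)^6. -/
open Finset Real



lemma sum_divisors_le_prod (f : ℕ → ℝ) (h1 : f 1 = 1) (h0 : ∀ n, 0 ≤ f n)
    (hmul : ∀ m n, m ≠ 0 → n ≠ 0 → Nat.Coprime m n → f (m * n) = f m * f n)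
    (g : ℕ → ℝ) {Q : ℕ} (hQ : Q ≠ 0)
    (hg : ∀ p ∈ Q.primeFactors, ∑ i ∈ range (Q.factorization p + 1), f (p ^ i) ≤ g p) :
    ∑ d ∈ Q.divisors, f d ≤ ∏ p ∈ Q.primeFactors, g p := by
  set F : ArithmeticFunction ℝ := ⟨fun n => if n = 0 then 0 else f n, by simp⟩ with hF
  have hFapp : ∀ n, n ≠ 0 → F n = f n := fun n hn => by simp [hF, hn]
  have hFmult : F.IsMultiplicative := by
    rw [ArithmeticFunction.IsMultiplicative.iff_ne_zero]
    refine ⟨by rw [hFapp 1 one_ne_zero]; exact h1, fun {m n} hm hn hmn => ?_⟩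
    rw [hFapp _ (mul_ne_zero hm hn), hFapp _ hm, hFapp _ hn]
    exact hmul m n hm hn hmn
  have hzeta : (↑(ArithmeticFunction.zeta) * F).IsMultiplicative :=
    ArithmeticFunction.isMultiplicative_zeta.natCast.mul hFmult
  have h2 : ∑ d ∈ Q.divisors, f d = (↑(ArithmeticFunction.zeta) * F) Q := by
    rw [ArithmeticFunction.coe_zeta_mul_apply]
    exact Finset.sum_congr rfl fun d hd => (hFapp d (Nat.pos_of_mem_divisors hd).ne').symm
  rw [h2, hzeta.multiplicative_factorization _ hQ, Finsupp.prod]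
  rw [Nat.support_factorization]
  refine Finset.prod_le_prod (fun p hp => ?_) (fun p hp => ?_) <;>
  · have hpp : p.Prime := Nat.prime_of_mem_primeFactors hp
    rw [ArithmeticFunction.coe_zeta_mul_apply, Nat.sum_divisors_prime_pow hpp]
    have : ∀ i ∈ range (Q.factorization p + 1), F (p ^ i) = f (p ^ i) :=
      fun i _ => hFapp _ (pow_ne_zero _ hpp.ne_zero)
    rw [Finset.sum_congr rfl this]
    first
      | exact Finset.sum_nonneg fun i _ => h0 _
      | exact hg p hp

lemma geo_le (x : ℝ) (h0 : 0 ≤ x) (h1 : x < 1) (k : ℕ) :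
    ∑ i ∈ range k, x ^ i ≤ 1 / (1 - x) := by
  rw [geom_sum_eq h1.ne k]
  have hx : (0:ℝ) < 1 - x := by linarith
  have : (x ^ k - 1) / (x - 1) = (1 - x ^ k) / (1 - x) := by
    rw [div_eq_div_iff (by linarith) (by linarith)]; ring
  rw [this]
  have : (0:ℝ) ≤ x ^ k := pow_nonneg h0 k
  gcongr
  linarith

lemma omega_mul_coprime {m n : ℕ} (h : Nat.Coprime m n) :
    ((m * n).primeFactors).card = m.primeFactors.card + n.primeFactors.card := by
  rw [Nat.Coprime.primeFactors_mul h, Finset.card_union_of_disjoint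
    (Nat.Coprime.disjoint_primeFactors h)]

lemma omega_prime_pow {p : ℕ} (hp : p.Prime) (i : ℕ) :
    ((p ^ (i+1)).primeFactors).card = 1 := by
  rw [Nat.primeFactors_prime_pow (Nat.succ_ne_zero i) hp]
  simp

lemma local_sum_S {p : ℕ} (hp : p.Prime) (k : ℕ) :
    ∑ i ∈ range (k + 1), (2:ℝ) ^ ((p ^ i).primeFactors).card / (p ^ i) ≤
      ((p:ℝ) / (p - 1)) ^ 2 := by
  have hp2 : (2:ℝ) ≤ (p:ℝ) := by exact_mod_cast hp.two_le
  have h1 : (0:ℝ) < (p:ℝ) - 1 := by linarith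
  have h0 : (0:ℝ) < (p:ℝ) := by linarith
  have step : ∀ i : ℕ, (2:ℝ) ^ ((p ^ (i+1)).primeFactors).card / (p ^ (i+1))
      = 2 * ((1:ℝ)/p) * ((1:ℝ)/p) ^ i := by
    intro i
    rw [omega_prime_pow hp]
    push_cast
    rw [pow_succ]
    field_simp
    rw [one_div, inv_pow, pow_succ, mul_comm ((p:ℝ) ^ i) (p:ℝ), mul_assoc,
      mul_inv_cancel₀ (by positivity), mul_one]
  rw [Finset.sum_range_succ']
  simp only [step, pow_zero, Nat.primeFactors_one]
  rw [← Finset.mul_sum]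
  have hgeo : ∑ i ∈ range k, ((1:ℝ)/p) ^ i ≤ 1 / (1 - 1/p) :=
    geo_le _ (by positivity) (by rw [div_lt_one h0]; linarith) k
  have h2 : 2 * ((1:ℝ)/p) * ∑ i ∈ range k, ((1:ℝ)/p) ^ i ≤ 2 / ((p:ℝ) - 1) := by
    calc 2 * ((1:ℝ)/p) * ∑ i ∈ range k, ((1:ℝ)/p) ^ i
        ≤ 2 * ((1:ℝ)/p) * (1 / (1 - 1/p)) := by
          exact mul_le_mul_of_nonneg_left hgeo (by positivity)
      _ = 2 / ((p:ℝ) - 1) := by field_simp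
  have key : 2 / ((p:ℝ) - 1) + 1 ≤ ((p:ℝ) / ((p:ℝ)-1)) ^ 2 := by
    rw [div_pow, div_add' _ _ _ h1.ne', div_le_div_iff₀ h1 (by positivity)]
    nlinarith
  simp only [pow_zero, Nat.primeFactors_one, Finset.card_empty, Nat.cast_one, div_one]
  linarith

lemma local_sum_T {p : ℕ} (hp : p.Prime) (k : ℕ) :
    ∑ i ∈ range (k + 1),
      (Nat.totient (p ^ i) : ℝ) * 2 ^ ((p ^ i).primeFactors).card / ((p:ℝ) ^ i) ^ 2 ≤
      ((p:ℝ) / (p - 1)) ^ 2 := by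
  have hp2 : (2:ℝ) ≤ (p:ℝ) := by exact_mod_cast hp.two_le
  have h1 : (0:ℝ) < (p:ℝ) - 1 := by linarith
  have h0 : (0:ℝ) < (p:ℝ) := by linarith
  have step : ∀ i : ℕ, (Nat.totient (p ^ (i+1)) : ℝ) * 2 ^ ((p ^ (i+1)).primeFactors).card
        / ((p:ℝ) ^ (i+1)) ^ 2 = (2 * ((p:ℝ)-1) / (p:ℝ)^2) * ((1:ℝ)/p) ^ i := by
    intro i
    rw [omega_prime_pow hp, Nat.totient_prime_pow hp (Nat.succ_pos i)]
    push_cast [Nat.cast_sub hp.one_le]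
    rw [div_pow, one_pow]
    rw [div_mul_div_comm]
    rw [div_eq_div_iff (by positivity) (by positivity)]
    ring
  rw [Finset.sum_range_succ']
  simp only [step]
  rw [← Finset.mul_sum]
  have hgeo : ∑ i ∈ range k, ((1:ℝ)/p) ^ i ≤ 1 / (1 - 1/p) :=
    geo_le _ (by positivity) (by rw [div_lt_one h0]; linarith) k
  have h2 : (2 * ((p:ℝ)-1) / (p:ℝ)^2) * ∑ i ∈ range k, ((1:ℝ)/p) ^ i ≤ 2 / (p:ℝ) := by
    calc (2 * ((p:ℝ)-1) / (p:ℝ)^2) * ∑ i ∈ range k, ((1:ℝ)/p) ^ i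
        ≤ (2 * ((p:ℝ)-1) / (p:ℝ)^2) * (1 / (1 - 1/p)) := by
          exact mul_le_mul_of_nonneg_left hgeo (by positivity)
      _ = 2 / (p:ℝ) := by
          have hne : (1:ℝ) - 1/p ≠ 0 := by
            have : (1:ℝ)/p < 1 := by rw [div_lt_one h0]; linarith
            linarith
          field_simp
  have key : 2 / (p:ℝ) + 1 ≤ ((p:ℝ) / ((p:ℝ)-1)) ^ 2 := by
    rw [div_pow, div_add' _ _ _ h0.ne', div_le_div_iff₀ h0 (by positivity)]
    nlinarith
  simp only [pow_zero, Nat.primeFactors_one, Finset.card_empty, Nat.totient_one,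
    Nat.cast_one, one_pow, div_one, mul_one, one_mul]
  linarith

lemma sum_S_le {Q : ℕ} (hQ : Q ≠ 0) :
    ∑ d ∈ Q.divisors, (2:ℝ) ^ d.primeFactors.card / d ≤
      (∏ p ∈ Q.primeFactors, (p:ℝ)/(p-1)) ^ 2 := by
  rw [← Finset.prod_pow]
  refine sum_divisors_le_prod (fun n => (2:ℝ) ^ n.primeFactors.card / n) (by simp)
    (fun n => by positivity) ?_ _ hQ ?_
  · intro m n hm hn hmn
    rw [omega_mul_coprime hmn, pow_add, Nat.cast_mul, div_mul_div_comm]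
  · intro p hp
    have := local_sum_S (Nat.prime_of_mem_primeFactors hp) (Q.factorization p)
    refine le_trans (le_of_eq ?_) this
    refine Finset.sum_congr rfl fun i _ => ?_
    push_cast
    ring

lemma sum_T_le {Q : ℕ} (hQ : Q ≠ 0) :
    ∑ d ∈ Q.divisors, (Nat.totient d : ℝ) * 2 ^ d.primeFactors.card / (d:ℝ) ^ 2 ≤
      (∏ p ∈ Q.primeFactors, (p:ℝ)/(p-1)) ^ 2 := by
  rw [← Finset.prod_pow]
  refine sum_divisors_le_prod
    (fun n => (Nat.totient n : ℝ) * 2 ^ n.primeFactors.card / (n:ℝ) ^ 2) (by simp)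
    (fun n => by positivity) ?_ _ hQ ?_
  · intro m n hm hn hmn
    rw [omega_mul_coprime hmn, pow_add, Nat.cast_mul, Nat.totient_mul hmn, Nat.cast_mul,
      mul_pow]
    field_simp
  · intro p hp
    have := local_sum_T (Nat.prime_of_mem_primeFactors hp) (Q.factorization p)
    refine le_trans (le_of_eq ?_) this
    refine Finset.sum_congr rfl fun i _ => ?_
    push_cast
    ring



lemma prod_pow_dvd (s : Finset ℕ) (e : ℕ → ℕ) (M : ℕ) (hs : ∀ p ∈ s, p.Prime)
    (hd : ∀ p ∈ s, p ^ e p ∣ M) : (∏ p ∈ s, p ^ e p) ∣ M := by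
  classical
  induction s using Finset.induction_on with
  | empty => simpa using one_dvd M
  | @insert a s ha ih =>
    rw [Finset.prod_insert ha]
    have hap : a.Prime := hs a (Finset.mem_insert_self a s)
    have hcop : Nat.Coprime (a ^ e a) (∏ p ∈ s, p ^ e p) := by
      apply Nat.Coprime.pow_left
      apply Nat.Coprime.prod_right
      intro q hq
      exact Nat.Coprime.pow_right _
        ((Nat.coprime_primes hap (hs q (Finset.mem_insert_of_mem hq))).mpr
          (fun h => ha (h ▸ hq)))
    exact hcop.mul_dvd_of_dvd_of_dvd (hd a (Finset.mem_insert_self a s))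
      (ih (fun p hp => hs p (Finset.mem_insert_of_mem hp))
          (fun p hp => hd p (Finset.mem_insert_of_mem hp)))

lemma mertens1 (N : ℕ) (hN : 1 ≤ N) :
    ∑ p ∈ (range (N+1)).filter Nat.Prime, Real.log p / p ≤ Real.log N + 3 := by
  set P := (range (N+1)).filter Nat.Prime with hP
  have hprime : ∀ p ∈ P, p.Prime := fun p hp => (Finset.mem_filter.mp hp).2
  have hNpos : (0:ℝ) < N := by exact_mod_cast hN
  -- prime-power product divides N!
  have hdvd : (∏ p ∈ P, p ^ (N / p)) ∣ Nat.factorial N := by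
    refine prod_pow_dvd P _ _ hprime (fun p hp => ?_)
    have hpp := hprime p hp
    rw [Nat.Prime.pow_dvd_factorial_iff hpp (Nat.lt_succ_of_le (Nat.log_le_self p N))]
    have h1mem : 1 ∈ Ico 1 (N+1) := Finset.mem_Ico.mpr ⟨le_refl 1, Nat.lt_succ_of_le hN⟩
    have h2 := Finset.single_le_sum (f := fun i => N / p ^ i) (fun i _ => Nat.zero_le _) h1mem
    simp only [pow_one] at h2
    exact h2
  -- take logs
  have hle : (∏ p ∈ P, p ^ (N / p)) ≤ N ^ N :=
    le_trans (Nat.le_of_dvd (Nat.factorial_pos N) hdvd) (Nat.factorial_le_pow N)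
  have hlog1 : ∑ p ∈ P, ((N / p : ℕ) : ℝ) * Real.log p ≤ N * Real.log N := by
    have h1 : Real.log (∏ p ∈ P, (p:ℝ) ^ (N / p)) ≤ Real.log ((N:ℝ) ^ N) := by
      apply Real.log_le_log (Finset.prod_pos (fun p hp => by
        have := (hprime p hp).pos
        positivity))
      exact_mod_cast hle
    rw [Real.log_prod (fun p hp => by
      have := (hprime p hp).pos
      positivity)] at h1
    simp only [Real.log_pow] at h1
    exact_mod_cast h1
  -- θ(N) ≤ N log 4 ≤ 3N
  have htheta : ∑ p ∈ P, Real.log p ≤ 3 * N := by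
    have h4 : (primorial N : ℝ) ≤ (4:ℝ) ^ N := by exact_mod_cast primorial_le_4_pow N
    have hppos : (0:ℝ) < (primorial N : ℝ) := by exact_mod_cast primorial_pos N
    have := Real.log_le_log hppos h4
    rw [Real.log_pow] at this
    have hprim : Real.log (primorial N : ℝ) = ∑ p ∈ P, Real.log p := by
      rw [primorial, hP]
      push_cast
      exact Real.log_prod (fun p hp => by
        have := (Finset.mem_filter.mp hp).2.pos
        positivity)
    rw [hprim] at this
    have hlog4 : Real.log 4 ≤ 3 := by
      have := Real.log_le_sub_one_of_pos (by norm_num : (0:ℝ) < 4)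
      linarith
    calc ∑ p ∈ P, Real.log p ≤ N * Real.log 4 := this
      _ ≤ N * 3 := by nlinarith [hlog4]
      _ = 3 * N := by ring
  -- floor bound
  have hfloor : ∀ p ∈ P, ((N:ℝ) / p - 1) * Real.log p ≤ ((N / p : ℕ) : ℝ) * Real.log p := by
    intro p hp
    have hpp := hprime p hp
    have hp0 : (0:ℝ) < p := by exact_mod_cast hpp.pos
    have hlogp : 0 ≤ Real.log p := Real.log_nonneg (by exact_mod_cast hpp.one_lt.le)
    apply mul_le_mul_of_nonneg_right _ hlogp
    have hmod : N < (N / p + 1) * p :=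
      (Nat.div_lt_iff_lt_mul hpp.pos).mp (Nat.lt_succ_self _)
    have hcast : (N:ℝ) < ((N / p : ℕ) + 1) * p := by exact_mod_cast hmod
    rw [sub_le_iff_le_add, div_le_iff₀ hp0]
    nlinarith [hcast]
  have main : ∑ p ∈ P, ((N:ℝ) / p - 1) * Real.log p ≤ N * Real.log N :=
    le_trans (Finset.sum_le_sum hfloor) hlog1
  have expand : ∑ p ∈ P, ((N:ℝ) / p - 1) * Real.log p
      = N * (∑ p ∈ P, Real.log p / p) - ∑ p ∈ P, Real.log p := by
    rw [Finset.mul_sum, ← Finset.sum_sub_distrib]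
    refine Finset.sum_congr rfl fun p hp => ?_
    have hp0 : (0:ℝ) < p := by exact_mod_cast (hprime p hp).pos
    field_simp
  rw [expand] at main
  have : N * (∑ p ∈ P, Real.log p / p) ≤ N * Real.log N + 3 * N := by linarith
  have hN' : (0:ℝ) < (N:ℝ) := hNpos
  nlinarith [this]


lemma mertens2_aux (N : ℕ) (hN : 2 ≤ N) :
    ∑ p ∈ (range (N+1)).filter Nat.Prime, (1:ℝ) / p ≤
      (∑ p ∈ (range (N+1)).filter Nat.Prime, Real.log p / p) / Real.log N
      + (Real.log (Real.log N) - Real.log (Real.log 2))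
      + 3 * (1 / Real.log 2 - 1 / Real.log N) := by
  induction N, hN using Nat.le_induction with
  | base =>
    have h2 : (range 3).filter Nat.Prime = {2} := by decide
    rw [h2]
    simp only [Finset.sum_singleton]
    have hl2 : Real.log 2 ≠ 0 := ne_of_gt (Real.log_pos (by norm_num))
    push_cast
    rw [div_div, mul_comm, ← div_div, div_self hl2]
    norm_num
  | succ n hn ih =>
    have hn1 : (1:ℝ) < n := by exact_mod_cast hn
    have hlogn : 0 < Real.log n := Real.log_pos hn1
    have hlogn1 : 0 < Real.log (n+1) := Real.log_pos (by push_cast; linarith)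
    have hmono : Real.log n ≤ Real.log (n+1) := by
      apply Real.log_le_log (by positivity)
      push_cast; linarith
    set T : ℝ := ∑ p ∈ (range (n+1)).filter Nat.Prime, Real.log p / p with hT
    have hTnonneg : 0 ≤ T := Finset.sum_nonneg fun p hp => by
      have hpp := (Finset.mem_filter.mp hp).2
      have h1 : (1:ℝ) ≤ p := by exact_mod_cast hpp.one_lt.le
      have h0 : (0:ℝ) < p := by linarith
      exact div_nonneg (Real.log_nonneg h1) h0.le
    have hTle : T ≤ Real.log n + 3 := mertens1 n (by omega)
    -- key inequality
    have hc : 0 ≤ 1 / Real.log n - 1 / Real.log (n+1) := by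
      rw [sub_nonneg]
      exact one_div_le_one_div_of_le hlogn hmono
    have hkey : T * (1 / Real.log n - 1 / Real.log (n+1)) ≤
        (Real.log (Real.log (n+1)) - Real.log (Real.log n))
        + 3 * (1 / Real.log n - 1 / Real.log (n+1)) := by
      have h1 : T * (1 / Real.log n - 1 / Real.log (n+1)) ≤
          (Real.log n + 3) * (1 / Real.log n - 1 / Real.log (n+1)) :=
        mul_le_mul_of_nonneg_right hTle hc
      have h2 : Real.log n * (1 / Real.log n - 1 / Real.log (n+1))
          = 1 - Real.log n / Real.log (n+1) := by field_simp
      have h3 : 1 - Real.log n / Real.log (n+1) ≤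
          Real.log (Real.log (n+1)) - Real.log (Real.log n) := by
        have hr : 0 < Real.log n / Real.log (n+1) := by positivity
        have := Real.log_le_sub_one_of_pos hr
        rw [Real.log_div (ne_of_gt hlogn) (ne_of_gt hlogn1)] at this
        linarith
      nlinarith [hc]
    -- splitting the sum
    have hsplit : (range (n+2)).filter Nat.Prime =
        if Nat.Prime (n+1) then insert (n+1) ((range (n+1)).filter Nat.Prime)
        else (range (n+1)).filter Nat.Prime := by
      rw [Finset.range_add_one, Finset.filter_insert]
    have hnotmem : (n+1) ∉ (range (n+1)).filter Nat.Prime := by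
      simp [Finset.mem_filter]
    by_cases hp : Nat.Prime (n+1)
    · rw [hsplit, if_pos hp, Finset.sum_insert hnotmem, Finset.sum_insert hnotmem]
      have hfs : (Real.log (n+1) / (n+1)) / Real.log (n+1) = 1/(n+1) := by
        rw [div_div, mul_comm, ← div_div, div_self (ne_of_gt hlogn1)]
      push_cast at *
      rw [add_div]
      rw [hfs]
      have hTdiv : T / Real.log (n+1) - T / Real.log n =
          - (T * (1 / Real.log n - 1 / Real.log (n+1))) := by
        field_simp
        ring
      linarith [hkey, ih]
    · rw [hsplit, if_neg hp]
      have hTdiv : T / Real.log (n+1) - T / Real.log n =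
          - (T * (1 / Real.log n - 1 / Real.log (n+1))) := by
        field_simp
        ring
      push_cast at *
      linarith [hkey, ih]


lemma mertens2 (N : ℕ) (hN : 2 ≤ N) :
    ∑ p ∈ (range (N+1)).filter Nat.Prime, (1:ℝ) / p ≤
      Real.log (Real.log N) + 14 := by
  have aux := mertens2_aux N hN
  have hN1 : (1:ℝ) < N := by exact_mod_cast hN
  have hlogN : 0 < Real.log N := Real.log_pos hN1
  have hT := mertens1 N (by omega)
  have hl2 : (0.6931471803 : ℝ) < Real.log 2 := Real.log_two_gt_d9
  have hl2' : Real.log 2 ≤ 1 := by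
    have := Real.log_le_sub_one_of_pos (by norm_num : (0:ℝ) < 2)
    linarith
  have hmono : Real.log 2 ≤ Real.log N := by
    apply Real.log_le_log (by norm_num)
    exact_mod_cast hN
  have h1 : (∑ p ∈ (range (N+1)).filter Nat.Prime, Real.log p / p) / Real.log N
      ≤ 1 + 3 / Real.log N := by
    rw [div_le_iff₀ hlogN]
    have : (1 + 3 / Real.log N) * Real.log N = Real.log N + 3 := by field_simp
    rw [this]
    exact hT
  have h2 : 3 / Real.log N ≤ 3 / Real.log 2 :=
    div_le_div_of_nonneg_left (by norm_num) (by linarith) hmono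
  have h3 : 3 / Real.log 2 ≤ 5 := by
    rw [div_le_iff₀ (by linarith)]
    linarith
  have h4 : - Real.log (Real.log 2) ≤ 1 := by
    have hhalf : (1/2 : ℝ) ≤ Real.log 2 := by linarith
    have := Real.log_le_log (by norm_num : (0:ℝ) < 1/2) hhalf
    have hlog_half : Real.log (1/2) = - Real.log 2 := by
      rw [one_div, Real.log_inv]
    linarith
  have h5 : 0 < 3 / Real.log N := by positivity
  have e1 : 3 * (1/Real.log 2 - 1/Real.log N) = 3/Real.log 2 - 3/Real.log N := by
    rw [mul_sub, mul_one_div, mul_one_div]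
  rw [e1] at aux
  linarith

lemma telescope (N : ℕ) (hN : 1 ≤ N) :
    ∑ p ∈ (range (N+1)).filter Nat.Prime, (1:ℝ) / (p * (p - 1)) ≤ 1 - 1 / N := by
  induction N, hN using Nat.le_induction with
  | base =>
    have h2 : (range 2).filter Nat.Prime = ∅ := by decide
    rw [h2]
    norm_num
  | succ n hn ih =>
    have hn0 : (0:ℝ) < n := by exact_mod_cast hn
    have hsplit : (range (n+2)).filter Nat.Prime =
        if Nat.Prime (n+1) then insert (n+1) ((range (n+1)).filter Nat.Prime)
        else (range (n+1)).filter Nat.Prime := by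
      rw [Finset.range_add_one, Finset.filter_insert]
    have hnotmem : (n+1) ∉ (range (n+1)).filter Nat.Prime := by
      simp [Finset.mem_filter]
    by_cases hp : Nat.Prime (n+1)
    · rw [hsplit, if_pos hp, Finset.sum_insert hnotmem]
      push_cast
      have key : (1:ℝ) / ((n+1) * ((n+1) - 1)) = 1/n - 1/(n+1) := by
        have : ((n:ℝ)+1) - 1 = n := by ring
        rw [this]
        field_simp
        ring
      push_cast at ih
      rw [key]
      linarith
    · rw [hsplit, if_neg hp]
      have : (1:ℝ)/(n+1) ≤ 1/n := by
        apply div_le_div_of_nonneg_left (by norm_num) hn0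
        linarith
      push_cast
      push_cast at ih
      linarith

lemma prod_bound (N : ℕ) (hN : 2 ≤ N) :
    ∏ p ∈ (range (N+1)).filter Nat.Prime, (p:ℝ) / (p - 1) ≤
      Real.exp 15 * Real.log N := by
  set P := (range (N+1)).filter Nat.Prime with hP
  have hprime : ∀ p ∈ P, p.Prime := fun p hp => (Finset.mem_filter.mp hp).2
  have hfact : ∀ p ∈ P, (0:ℝ) < (p:ℝ) - 1 ∧ (2:ℝ) ≤ (p:ℝ) := by
    intro p hp
    have := (hprime p hp).two_le
    have h2 : (2:ℝ) ≤ (p:ℝ) := by exact_mod_cast this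
    exact ⟨by linarith, h2⟩
  have hpos : ∀ p ∈ P, (0:ℝ) < (p:ℝ) / (p - 1) := by
    intro p hp
    obtain ⟨h1, h2⟩ := hfact p hp
    positivity
  have hexp : ∏ p ∈ P, (p:ℝ) / (p - 1)
      = Real.exp (∑ p ∈ P, Real.log ((p:ℝ) / (p - 1))) := by
    rw [Real.exp_sum]
    exact Finset.prod_congr rfl fun p hp => (Real.exp_log (hpos p hp)).symm
  rw [hexp]
  have hlogsum : ∑ p ∈ P, Real.log ((p:ℝ) / (p - 1)) ≤
      Real.log (Real.log N) + 15 := by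
    have hper : ∀ p ∈ P, Real.log ((p:ℝ) / (p - 1)) ≤ 1/p + 1/(p * (p-1)) := by
      intro p hp
      obtain ⟨h1, h2⟩ := hfact p hp
      have hx := Real.log_le_sub_one_of_pos (hpos p hp)
      have : (p:ℝ)/(p-1) - 1 = 1/p + 1/(p*(p-1)) := by
        field_simp
        ring
      linarith
    calc ∑ p ∈ P, Real.log ((p:ℝ) / (p - 1))
        ≤ ∑ p ∈ P, ((1:ℝ)/p + 1/(p * (p-1))) := Finset.sum_le_sum hper
      _ = (∑ p ∈ P, (1:ℝ)/p) + ∑ p ∈ P, (1:ℝ)/(p * (p-1)) := Finset.sum_add_distrib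
      _ ≤ (Real.log (Real.log N) + 14) + (1 - 1/N) := by
          have := mertens2 N hN
          have := telescope N (by omega)
          rw [hP]
          gcongr <;> assumption
      _ ≤ Real.log (Real.log N) + 15 := by
          have : (0:ℝ) < 1/N := by
            have : (0:ℝ) < N := by exact_mod_cast (by omega : 0 < N)
            positivity
          linarith
  calc Real.exp (∑ p ∈ P, Real.log ((p:ℝ) / (p - 1)))
      ≤ Real.exp (Real.log (Real.log N) + 15) := Real.exp_le_exp.mpr hlogsum
    _ = Real.exp 15 * Real.log N := by
        rw [Real.exp_add, Real.exp_log (Real.log_pos (by exact_mod_cast hN))]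
        ring


lemma primeFactors_lcm {a b : ℕ} (ha : a ≠ 0) (hb : b ≠ 0) :
    (Nat.lcm a b).primeFactors = a.primeFactors ∪ b.primeFactors := by
  ext p
  simp only [Nat.mem_primeFactors, Finset.mem_union]
  constructor
  · rintro ⟨hp, hdvd, -⟩
    rcases (Nat.Prime.dvd_mul hp).mp (hdvd.trans (Nat.lcm_dvd_mul a b)) with h | h
    · exact Or.inl ⟨hp, h, ha⟩
    · exact Or.inr ⟨hp, h, hb⟩
  · have hlcm : Nat.lcm a b ≠ 0 := Nat.lcm_ne_zero ha hb
    rintro (⟨hp, h, -⟩ | ⟨hp, h, -⟩)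
    · exact ⟨hp, h.trans (Nat.dvd_lcm_left a b), hlcm⟩
    · exact ⟨hp, h.trans (Nat.dvd_lcm_right a b), hlcm⟩

lemma gcd_divisors_filter {Q g1 g2 : ℕ} (h1 : g1 ∈ Q.divisors) (h2 : g2 ∈ Q.divisors) :
    (Nat.gcd g1 g2).divisors = Q.divisors.filter (fun d => d ∣ g1 ∧ d ∣ g2) := by
  have hQ : Q ≠ 0 := (Nat.mem_divisors.mp h1).2
  have hg1 : g1 ≠ 0 := ne_of_gt (Nat.pos_of_mem_divisors h1)
  have hd1 : g1 ∣ Q := (Nat.mem_divisors.mp h1).1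
  ext d
  simp only [Nat.mem_divisors, Finset.mem_filter]
  constructor
  · rintro ⟨hdvd, -⟩
    have := Nat.dvd_gcd_iff.mp hdvd
    exact ⟨⟨this.1.trans hd1, hQ⟩, this⟩
  · rintro ⟨-, hdg1, hdg2⟩
    exact ⟨Nat.dvd_gcd hdg1 hdg2, fun h => hg1 (Nat.eq_zero_of_gcd_eq_zero_left h)⟩

lemma pair_bound {Q g1 g2 : ℕ} (h1 : g1 ∈ Q.divisors) (h2 : g2 ∈ Q.divisors) :
    (2:ℝ) ^ (Nat.lcm g1 g2).primeFactors.card / (Nat.lcm g1 g2) ≤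
      ((2:ℝ) ^ g1.primeFactors.card / g1) * ((2:ℝ) ^ g2.primeFactors.card / g2) *
      ∑ d ∈ (Nat.gcd g1 g2).divisors, (Nat.totient d : ℝ) / 2 ^ d.primeFactors.card := by
  have hg1 : 0 < g1 := Nat.pos_of_mem_divisors h1
  have hg2 : 0 < g2 := Nat.pos_of_mem_divisors h2
  set G := Nat.gcd g1 g2 with hG
  set L := Nat.lcm g1 g2 with hL
  have hGpos : 0 < G := Nat.gcd_pos_of_pos_left _ hg1
  have hLpos : 0 < L := Nat.pos_of_ne_zero (Nat.lcm_ne_zero hg1.ne' hg2.ne')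
  -- step (a): the totient sum is at least G / 2^ω(G)
  have ha : (G:ℝ) / 2 ^ G.primeFactors.card ≤
      ∑ d ∈ G.divisors, (Nat.totient d : ℝ) / 2 ^ d.primeFactors.card := by
    have : ∀ d ∈ G.divisors, (Nat.totient d : ℝ) / 2 ^ G.primeFactors.card ≤
        (Nat.totient d : ℝ) / 2 ^ d.primeFactors.card := by
      intro d hd
      have hsub : d.primeFactors ⊆ G.primeFactors :=
        Nat.primeFactors_mono (Nat.mem_divisors.mp hd).1 hGpos.ne'
      have hcard : d.primeFactors.card ≤ G.primeFactors.card := Finset.card_le_card hsub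
      apply div_le_div_of_nonneg_left (by positivity) (by positivity)
      exact pow_le_pow_right₀ (by norm_num) hcard
    calc (G:ℝ) / 2 ^ G.primeFactors.card
        = ∑ d ∈ G.divisors, (Nat.totient d : ℝ) / 2 ^ G.primeFactors.card := by
          rw [← Finset.sum_div]
          congr 1
          rw [← Nat.cast_sum]
          rw [Nat.sum_totient]
      _ ≤ _ := Finset.sum_le_sum this
  -- step (b): exact identity
  have hb : ((2:ℝ) ^ g1.primeFactors.card / g1) * ((2:ℝ) ^ g2.primeFactors.card / g2) *
      ((G:ℝ) / 2 ^ G.primeFactors.card) = (2:ℝ) ^ L.primeFactors.card / L := by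
    have hcard : L.primeFactors.card + G.primeFactors.card =
        g1.primeFactors.card + g2.primeFactors.card := by
      rw [hL, hG, primeFactors_lcm hg1.ne' hg2.ne', Nat.primeFactors_gcd hg1.ne' hg2.ne']
      exact Finset.card_union_add_card_inter _ _
    have hpow : (2:ℝ) ^ g1.primeFactors.card * 2 ^ g2.primeFactors.card =
        2 ^ L.primeFactors.card * 2 ^ G.primeFactors.card := by
      rw [← pow_add, ← pow_add, hcard]
    have hprod : (G:ℝ) * L = g1 * g2 := by
      rw [hG, hL]
      exact_mod_cast Nat.gcd_mul_lcm g1 g2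
    have e1 : (g1:ℝ) ≠ 0 := by positivity
    have e2 : (g2:ℝ) ≠ 0 := by positivity
    have e3 : (L:ℝ) ≠ 0 := by
      have : (0:ℝ) < L := by exact_mod_cast hLpos
      exact this.ne'
    have e4 : (2:ℝ) ^ G.primeFactors.card ≠ 0 := by positivity
    field_simp
    linear_combination ((G:ℝ) * L) * hpow
      + ((2:ℝ) ^ L.primeFactors.card * 2 ^ G.primeFactors.card) * hprod
  rw [← hb]
  have hnn : 0 ≤ ((2:ℝ) ^ g1.primeFactors.card / g1) * ((2:ℝ) ^ g2.primeFactors.card / g2) :=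
    by positivity
  exact mul_le_mul_of_nonneg_left ha hnn

lemma inner_bound {Q d : ℕ} (hQ : Q ≠ 0) (hd : 0 < d) :
    ∑ g ∈ Q.divisors.filter (fun g => d ∣ g), (2:ℝ) ^ g.primeFactors.card / g ≤
    ((2:ℝ) ^ d.primeFactors.card / d) *
      ∑ g ∈ Q.divisors, (2:ℝ) ^ g.primeFactors.card / g := by
  have step1 : ∀ g ∈ Q.divisors.filter (fun g => d ∣ g),
      (2:ℝ) ^ g.primeFactors.card / g ≤
      ((2:ℝ) ^ d.primeFactors.card / d) * ((2:ℝ) ^ (g/d).primeFactors.card / ((g/d : ℕ) : ℝ)) := by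
    intro g hg
    obtain ⟨hgD, hdg⟩ := Finset.mem_filter.mp hg
    have hgpos : 0 < g := Nat.pos_of_mem_divisors hgD
    have hmpos : 0 < g / d := Nat.div_pos (Nat.le_of_dvd hgpos hdg) hd
    have hgm : d * (g / d) = g := Nat.mul_div_cancel' hdg
    have hcard : g.primeFactors.card ≤ d.primeFactors.card + (g/d).primeFactors.card := by
      conv_lhs => rw [← hgm]
      rw [Nat.primeFactors_mul hd.ne' hmpos.ne']
      exact le_trans (Finset.card_union_le _ _) (le_refl _)
    have hpow : (2:ℝ) ^ g.primeFactors.card ≤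
        2 ^ d.primeFactors.card * 2 ^ (g/d).primeFactors.card := by
      rw [← pow_add]
      exact pow_le_pow_right₀ (by norm_num) hcard
    have hcast : (g:ℝ) = (d:ℝ) * (g/d : ℕ) := by exact_mod_cast hgm.symm
    rw [div_mul_div_comm, hcast]
    have hden : (0:ℝ) < (d:ℝ) * (g/d : ℕ) := by
      have h1 : (0:ℝ) < d := by exact_mod_cast hd
      have h2 : (0:ℝ) < (g/d : ℕ) := by exact_mod_cast hmpos
      positivity
    exact div_le_div₀ (by positivity) hpow hden (le_refl _)
  calc ∑ g ∈ Q.divisors.filter (fun g => d ∣ g), (2:ℝ) ^ g.primeFactors.card / g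
      ≤ ∑ g ∈ Q.divisors.filter (fun g => d ∣ g),
          ((2:ℝ) ^ d.primeFactors.card / d) * ((2:ℝ) ^ (g/d).primeFactors.card / ((g/d : ℕ) : ℝ)) :=
        Finset.sum_le_sum step1
    _ = ((2:ℝ) ^ d.primeFactors.card / d) * ∑ g ∈ Q.divisors.filter (fun g => d ∣ g),
          (2:ℝ) ^ (g/d).primeFactors.card / ((g/d : ℕ) : ℝ) := by rw [Finset.mul_sum]
    _ ≤ _ := by
        apply mul_le_mul_of_nonneg_left _ (by positivity)
        have himg : ∑ g ∈ Q.divisors.filter (fun g => d ∣ g),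
            (2:ℝ) ^ (g/d).primeFactors.card / ((g/d : ℕ) : ℝ)
            = ∑ m ∈ (Q.divisors.filter (fun g => d ∣ g)).image (· / d),
              (2:ℝ) ^ m.primeFactors.card / m := by
          rw [Finset.sum_image]
          intro x hx y hy hxy
          have hdx := (Finset.mem_filter.mp hx).2
          have hdy := (Finset.mem_filter.mp hy).2
          rw [← Nat.mul_div_cancel' hdx, ← Nat.mul_div_cancel' hdy, show x / d = y / d from hxy]
        rw [himg]
        apply Finset.sum_le_sum_of_subset_of_nonneg
        · intro m hm
          obtain ⟨g, hg, rfl⟩ := Finset.mem_image.mp hm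
          obtain ⟨hgD, hdg⟩ := Finset.mem_filter.mp hg
          have hgpos : 0 < g := Nat.pos_of_mem_divisors hgD
          refine Nat.mem_divisors.mpr ⟨?_, hQ⟩
          exact dvd_trans (Nat.div_dvd_of_dvd hdg) (Nat.mem_divisors.mp hgD).1
        · intro m _ _
          positivity

lemma step5 {Q : ℕ} (hQ : Q ≠ 0) :
    ∑ g ∈ Q.divisors ×ˢ Q.divisors,
        (2:ℝ) ^ (Nat.lcm g.1 g.2).primeFactors.card / (Nat.lcm g.1 g.2) ≤
    (∑ d ∈ Q.divisors, (2:ℝ) ^ d.primeFactors.card / d) ^ 2 *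
      ∑ d ∈ Q.divisors, (Nat.totient d : ℝ) * 2 ^ d.primeFactors.card / (d:ℝ) ^ 2 := by
  classical
  set D := Q.divisors with hD
  set h : ℕ → ℝ := fun g => (2:ℝ) ^ g.primeFactors.card / g with hh
  set w : ℕ → ℝ := fun d => (Nat.totient d : ℝ) / 2 ^ d.primeFactors.card with hw
  have hhnn : ∀ g, 0 ≤ h g := fun g => by rw [hh]; positivity
  have hwnn : ∀ d, 0 ≤ w d := fun d => by rw [hw]; positivity
  set S : ℝ := ∑ d ∈ D, h d with hS
  have hSnn : 0 ≤ S := Finset.sum_nonneg fun d _ => hhnn d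
  calc ∑ g ∈ D ×ˢ D, (2:ℝ) ^ (Nat.lcm g.1 g.2).primeFactors.card / (Nat.lcm g.1 g.2)
      ≤ ∑ x ∈ D ×ˢ D, h x.1 * h x.2 * ∑ d ∈ D, (if d ∣ x.1 ∧ d ∣ x.2 then w d else 0) := by
        refine Finset.sum_le_sum fun x hx => ?_
        obtain ⟨hx1, hx2⟩ := Finset.mem_product.mp hx
        have := pair_bound hx1 hx2
        rw [gcd_divisors_filter hx1 hx2, Finset.sum_filter] at this
        exact this
    _ = ∑ x ∈ D ×ˢ D, ∑ d ∈ D,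
          (if d ∣ x.1 then h x.1 else 0) * (if d ∣ x.2 then h x.2 else 0) * w d := by
        refine Finset.sum_congr rfl fun x _ => ?_
        rw [Finset.mul_sum]
        refine Finset.sum_congr rfl fun d _ => ?_
        by_cases hd1 : d ∣ x.1 <;> by_cases hd2 : d ∣ x.2 <;> simp [hd1, hd2]
    _ = ∑ d ∈ D, ∑ x ∈ D ×ˢ D,
          (if d ∣ x.1 then h x.1 else 0) * (if d ∣ x.2 then h x.2 else 0) * w d :=
        Finset.sum_comm
    _ = ∑ d ∈ D, (∑ g ∈ D, if d ∣ g then h g else 0) *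
          (∑ g ∈ D, if d ∣ g then h g else 0) * w d := by
        refine Finset.sum_congr rfl fun d _ => ?_
        rw [← Finset.sum_mul, Finset.sum_product]
        congr 1
        rw [Finset.sum_mul_sum]
    _ ≤ ∑ d ∈ D, (((2:ℝ) ^ d.primeFactors.card / d) * S) *
          (((2:ℝ) ^ d.primeFactors.card / d) * S) * w d := by
        refine Finset.sum_le_sum fun d hd => ?_
        have hdpos : 0 < d := Nat.pos_of_mem_divisors hd
        have hinner : (∑ g ∈ D, if d ∣ g then h g else 0) ≤
            ((2:ℝ) ^ d.primeFactors.card / d) * S := by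
          rw [← Finset.sum_filter]
          exact inner_bound hQ hdpos
        have hinn_nn : 0 ≤ ∑ g ∈ D, if d ∣ g then h g else 0 :=
          Finset.sum_nonneg fun g _ => by split <;> simp [hhnn]
        refine mul_le_mul_of_nonneg_right ?_ (hwnn d)
        exact mul_le_mul hinner hinner hinn_nn (by positivity)
    _ = S ^ 2 * ∑ d ∈ D, (Nat.totient d : ℝ) * 2 ^ d.primeFactors.card / (d:ℝ) ^ 2 := by
        rw [Finset.mul_sum]
        refine Finset.sum_congr rfl fun d hd => ?_
        have hdpos : 0 < d := Nat.pos_of_mem_divisors hd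
        have hd0 : (d:ℝ) ≠ 0 := by positivity
        rw [hw]
        have h2 : (2:ℝ) ^ d.primeFactors.card ≠ 0 := by positivity
        field_simp


/-- There is an absolute constant `K` such that for every positive integer `Q`
whose prime factors are all at most `y` (with `y ≥ 2`),
`∑_{g₁, g₂ ∣ Q} 2^(ω(lcm(g₁,g₂))) / lcm(g₁,g₂) ≤ K (log y)^6`. -/
theorem stmt7 :
    ∃ K : ℝ, 0 < K ∧ ∀ (y : ℝ), 2 ≤ y → ∀ Q : ℕ, 0 < Q →
      (∀ p ∈ Q.primeFactors, (p : ℝ) ≤ y) →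
      ∑ g ∈ Q.divisors ×ˢ Q.divisors,
          (2 : ℝ) ^ (Nat.lcm g.1 g.2).primeFactors.card / (Nat.lcm g.1 g.2) ≤
        K * Real.log y ^ 6 := by
  refine ⟨Real.exp 90, Real.exp_pos 90, fun y hy Q hQ hfac => ?_⟩
  have hQ0 : Q ≠ 0 := hQ.ne'
  set N := Nat.floor y with hN
  have hy0 : (0:ℝ) ≤ y := by linarith
  have hN2 : 2 ≤ N := Nat.le_floor (by exact_mod_cast hy)
  have hNy : (N:ℝ) ≤ y := Nat.floor_le hy0
  have hN1 : (1:ℝ) < N := by exact_mod_cast hN2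
  have hsub : Q.primeFactors ⊆ (range (N+1)).filter Nat.Prime := by
    intro p hp
    refine Finset.mem_filter.mpr ⟨Finset.mem_range.mpr ?_, Nat.prime_of_mem_primeFactors hp⟩
    have : p ≤ N := Nat.le_floor (hfac p hp)
    omega
  set M : ℝ := ∏ p ∈ Q.primeFactors, (p:ℝ)/(p-1) with hM
  have hfacge : ∀ p ∈ (range (N+1)).filter Nat.Prime, (1:ℝ) ≤ (p:ℝ)/(p-1) := by
    intro p hp
    have h2 : (2:ℝ) ≤ (p:ℝ) := by exact_mod_cast (Finset.mem_filter.mp hp).2.two_le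
    rw [le_div_iff₀ (by linarith)]
    linarith
  have hone : ∀ (s : Finset ℕ), (∀ p ∈ s, (1:ℝ) ≤ (p:ℝ)/((p:ℝ)-1)) →
      (1:ℝ) ≤ ∏ p ∈ s, (p:ℝ)/((p:ℝ)-1) := by
    intro s h
    calc (1:ℝ) = ∏ p ∈ s, 1 := by simp
      _ ≤ ∏ p ∈ s, (p:ℝ)/((p:ℝ)-1) :=
          Finset.prod_le_prod (fun i _ => by norm_num) h
  have hM1 : (1:ℝ) ≤ M := hone Q.primeFactors (fun p hp => hfacge p (hsub hp))
  have hM0 : (0:ℝ) ≤ M := by linarith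
  have hMP : M ≤ ∏ p ∈ (range (N+1)).filter Nat.Prime, (p:ℝ)/(p-1) := by
    rw [hM, ← Finset.prod_sdiff hsub]
    exact le_mul_of_one_le_left hM0 (hone _ (fun p hp =>
      hfacge p (Finset.mem_sdiff.mp hp).1))
  set S : ℝ := ∑ d ∈ Q.divisors, (2:ℝ) ^ d.primeFactors.card / d with hS
  set T' : ℝ := ∑ d ∈ Q.divisors, (Nat.totient d : ℝ) * 2 ^ d.primeFactors.card / (d:ℝ) ^ 2
    with hT'
  have hSnn : 0 ≤ S := Finset.sum_nonneg fun d _ => by positivity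
  have hT'nn : 0 ≤ T' := Finset.sum_nonneg fun d _ => by positivity
  have hSM : S ≤ M ^ 2 := sum_S_le hQ0
  have hTM : T' ≤ M ^ 2 := sum_T_le hQ0
  have main : ∑ g ∈ Q.divisors ×ˢ Q.divisors,
      (2 : ℝ) ^ (Nat.lcm g.1 g.2).primeFactors.card / (Nat.lcm g.1 g.2) ≤ M ^ 6 := by
    calc ∑ g ∈ Q.divisors ×ˢ Q.divisors,
        (2 : ℝ) ^ (Nat.lcm g.1 g.2).primeFactors.card / (Nat.lcm g.1 g.2)
        ≤ S ^ 2 * T' := step5 hQ0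
      _ ≤ (M ^ 2) ^ 2 * M ^ 2 := by
          refine mul_le_mul (pow_le_pow_left₀ hSnn hSM 2) hTM hT'nn (by positivity)
      _ = M ^ 6 := by ring
  have hlogN : 0 < Real.log N := Real.log_pos hN1
  have hMbound : M ≤ Real.exp 15 * Real.log N := le_trans hMP (prod_bound N hN2)
  have hlogNy : Real.log N ≤ Real.log y := Real.log_le_log (by linarith) hNy
  calc ∑ g ∈ Q.divisors ×ˢ Q.divisors,
      (2 : ℝ) ^ (Nat.lcm g.1 g.2).primeFactors.card / (Nat.lcm g.1 g.2)
      ≤ M ^ 6 := main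
    _ ≤ (Real.exp 15 * Real.log N) ^ 6 := pow_le_pow_left₀ hM0 hMbound 6
    _ = Real.exp 90 * Real.log N ^ 6 := by
        rw [mul_pow, ← Real.exp_nat_mul]
        norm_num
    _ ≤ Real.exp 90 * Real.log y ^ 6 := by
        refine mul_le_mul_of_nonneg_left ?_ (Real.exp_pos 90).le
        exact pow_le_pow_left₀ hlogN.le hlogNy 6
end

section
/- Let A be a finite set of congruence classes a_i mod d_i (i = 1, ..., n) with all d_i > 1, and suppose that for every modulus d, at most s of the classes have d_i = d (i.e., A has multiplicity at most s). Let x ∈ ℤ/Qℤ where Q = lcm(d_1, ..., d_n), let p be a prime, let Q' be the largest divisor of Q whose prime factors are all less than p, and let F(x) be the fiber of x under the projection ℤ/Qℤ → ℤ/Q'ℤ. Let B be the union over all i with largest prime factor of d_i equal to p of the residues mod Q lying in a_i mod d_i. Then |F(x) ∩ B|/|F(x)| ≤ ∑_{r≥1, p^r | Q} ∑_{g | Q'} ∑_{i : d_i = g·p^r} 1_{x ⊆ a_i + gℤ} / p^r. -/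
open Finset

private lemma count_mod_le {Q L : ℕ} (hLQ : L ∣ Q)
    (P : ℕ → Prop) [DecidablePred P]
    (hmod : ∀ x ∈ (range Q).filter P, ∀ y ∈ (range Q).filter P, x % L = y % L) :
    ((range Q).filter P).card ≤ Q / L := by
  have h : ((range Q).filter P).card ≤ (range (Q / L)).card := by
    apply Finset.card_le_card_of_injOn (fun x => x / L)
    · intro x hx
      have hxQ : x < Q := mem_range.mp (mem_filter.mp hx).1
      exact mem_range.mpr (Nat.div_lt_div_of_lt_of_dvd hLQ hxQ)
    · intro x hx y hy hxy
      have h1 := hmod x hx y hy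
      simp only at hxy
      calc x = L * (x / L) + x % L := (Nat.div_add_mod x L).symm
        _ = L * (y / L) + y % L := by rw [hxy, h1]
        _ = y := Nat.div_add_mod y L
  simpa using h

/-- Lemma on fibers: let `A = {a_i mod d_i}` with `d_i > 1` and multiplicity at
most `s`, `Q = lcm(d_1, ..., d_n)`, `p` a prime, `Q'` the largest divisor of `Q`
all of whose prime factors are `< p`, and `c ∈ ℤ` a representative of
`x ∈ ℤ/Qℤ`. Let `B` be the union of the classes `a_i mod d_i` over `i` with
`P⁺(d_i) = p`. Then
`|F(x) ∩ B|/|F(x)| ≤ ∑_{r ≥ 1, p^r ∣ Q} ∑_{g ∣ Q'} ∑_{i : d_i = g p^r} 1_{x ⊆ a_i + gℤ}/p^r`,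
where `|F(x)| = Q/Q'` and `F(x) ∩ B` is counted by residues mod `Q`. -/
theorem stmt16 (n s : ℕ) (d : Fin n → ℕ) (a : Fin n → ℤ)
    (hd : ∀ i, 1 < d i)
    (hmult : ∀ m : ℕ, (univ.filter (fun i => d i = m)).card ≤ s)
    (Q : ℕ) (hQ : Q = univ.lcm d)
    (p : ℕ) (hp : p.Prime)
    (Q' : ℕ) (hQ'dvd : Q' ∣ Q)
    (hQ'small : ∀ q ∈ Q'.primeFactors, q < p)
    (hQ'max : ∀ q ∈ (Q / Q').primeFactors, p ≤ q)
    (c : ℤ) :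
    (((Finset.range Q).filter (fun x : ℕ =>
        (x : ℤ) ≡ c [ZMOD Q'] ∧
        ∃ i : Fin n, (d i).primeFactors.sup id = p ∧ (x : ℤ) ≡ a i [ZMOD d i])).card : ℝ) /
        ((Q / Q' : ℕ) : ℝ) ≤
      ∑ r ∈ Icc 1 (Q.factorization p), ∑ g ∈ Q'.divisors, ∑ i : Fin n,
        if d i = g * p ^ r ∧ c ≡ a i [ZMOD g] then 1 / (p : ℝ) ^ r else 0 := by
  classical
  -- basic positivity facts
  have hQ0 : 0 < Q := by
    rcases Nat.eq_zero_or_pos Q with h | h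
    · exfalso
      rw [hQ] at h
      rw [Finset.lcm_eq_zero_iff] at h
      obtain ⟨i, _, hi⟩ := h
      exact absurd hi.symm (by have := hd i; omega)
    · exact h
  have hQ'ne : Q' ≠ 0 := by
    rintro rfl
    simp [Nat.eq_zero_of_zero_dvd hQ'dvd] at hQ0
  have hD0 : 0 < Q / Q' := Nat.div_pos (Nat.le_of_dvd hQ0 hQ'dvd) (Nat.pos_of_ne_zero hQ'ne)
  have hQeq : Q' * (Q / Q') = Q := Nat.mul_div_cancel' hQ'dvd
  have hpQ' : ¬ p ∣ Q' := by
    intro h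
    exact absurd (hQ'small p (Nat.mem_primeFactors.mpr ⟨hp, h, hQ'ne⟩)) (lt_irrefl p)
  -- the per-index sets
  set T : Fin n → Finset ℕ := fun i => (range Q).filter (fun x =>
    (d i).primeFactors.sup id = p ∧ (x : ℤ) ≡ c [ZMOD Q'] ∧ (x : ℤ) ≡ a i [ZMOD d i]) with hT
  -- the key per-index bound
  have key : ∀ i : Fin n, ((T i).card : ℝ) / ((Q / Q' : ℕ) : ℝ) ≤
      ∑ r ∈ Icc 1 (Q.factorization p), ∑ g ∈ Q'.divisors,
        if d i = g * p ^ r ∧ c ≡ a i [ZMOD g] then 1 / (p : ℝ) ^ r else 0 := by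
    intro i
    have hsum_nonneg : (0:ℝ) ≤ ∑ r ∈ Icc 1 (Q.factorization p), ∑ g ∈ Q'.divisors,
        if d i = g * p ^ r ∧ c ≡ a i [ZMOD g] then 1 / (p : ℝ) ^ r else 0 := by
      apply Finset.sum_nonneg; intro r _; apply Finset.sum_nonneg; intro g _
      split <;> positivity
    by_cases hPi : (d i).primeFactors.sup id = p
    · -- main case
      have hdne : d i ≠ 0 := by have := hd i; omega
      set r := (d i).factorization p with hr
      set g := d i / p ^ r with hg
      have hpdvd : p ∣ d i := by
        have hne : (d i).primeFactors.Nonempty := Nat.nonempty_primeFactors.mpr (hd i)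
        obtain ⟨q, hq, hq2⟩ := Finset.exists_mem_eq_sup _ hne id
        have hqp : q = p := by rw [hPi] at hq2; simpa using hq2.symm
        exact hqp ▸ Nat.dvd_of_mem_primeFactors hq
      have hr1 : 1 ≤ r := hp.factorization_pos_of_dvd hdne hpdvd
      have hprdvd : p ^ r ∣ d i := Nat.ordProj_dvd _ _
      have hdeq : d i = g * p ^ r := (Nat.div_mul_cancel hprdvd).symm
      have hpg : ¬ p ∣ g := Nat.not_dvd_ordCompl hp hdne
      have hgdvdd : g ∣ d i := Nat.ordCompl_dvd _ _
      have hddQ : d i ∣ Q := hQ ▸ Finset.dvd_lcm (mem_univ i)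
      have hcop : Nat.Coprime Q' (p ^ r) :=
        Nat.Coprime.pow_right _ (((Nat.Prime.coprime_iff_not_dvd hp).mpr hpQ').symm)
      have hprD : p ^ r ∣ Q / Q' := by
        have h1 : p ^ r ∣ Q' * (Q / Q') := by rw [hQeq]; exact hprdvd.trans hddQ
        exact Nat.Coprime.dvd_of_dvd_mul_left hcop.symm h1
      have hrK : r ≤ Q.factorization p :=
        (Nat.Prime.pow_dvd_iff_le_factorization hp hQ0.ne').mp (hprdvd.trans hddQ)
      have hcopg : Nat.Coprime g (Q / Q') := by
        by_contra hc
        obtain ⟨q, hq, hqd⟩ := Nat.exists_prime_and_dvd hc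
        have hq1 : q ∣ g := hqd.trans (Nat.gcd_dvd_left _ _)
        have hq2 : q ∣ Q / Q' := hqd.trans (Nat.gcd_dvd_right _ _)
        have hle : p ≤ q := hQ'max q (Nat.mem_primeFactors.mpr ⟨hq, hq2, hD0.ne'⟩)
        have hge : q ≤ p := by
          have : q ∈ (d i).primeFactors :=
            Nat.mem_primeFactors.mpr ⟨hq, hq1.trans hgdvdd, hdne⟩
          calc q = id q := rfl
            _ ≤ (d i).primeFactors.sup id := Finset.le_sup this
            _ = p := hPi
        have : q = p := le_antisymm hge hle
        exact hpg (this ▸ hq1)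
      have hgQ' : g ∣ Q' := by
        have h1 : g ∣ Q' * (Q / Q') := by rw [hQeq]; exact hgdvdd.trans hddQ
        exact Nat.Coprime.dvd_of_dvd_mul_right hcopg h1
      by_cases hcompat : c ≡ a i [ZMOD g]
      · -- counting bound
        have hcount : (T i).card ≤ (Q / Q') / p ^ r := by
          have hLQ : Q' * p ^ r ∣ Q := by rw [← hQeq]; exact mul_dvd_mul_left Q' hprD
          have hb := count_mod_le hLQ (fun x =>
            (d i).primeFactors.sup id = p ∧ (x : ℤ) ≡ c [ZMOD Q'] ∧ (x : ℤ) ≡ a i [ZMOD d i])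
            ?_
          · rwa [← Nat.div_div_eq_div_mul] at hb
          · intro x hx y hy
            obtain ⟨-, hxc, hxa⟩ := (mem_filter.mp hx).2
            obtain ⟨-, hyc, hya⟩ := (mem_filter.mp hy).2
            have h1 : (x : ℤ) ≡ (y : ℤ) [ZMOD (Q' : ℤ)] := hxc.trans hyc.symm
            have h2 : (x : ℤ) ≡ (y : ℤ) [ZMOD ((p ^ r : ℕ) : ℤ)] := by
              refine Int.ModEq.of_dvd ?_ (hxa.trans hya.symm)
              exact_mod_cast hprdvd
            have hcop' : ((Q' : ℤ)).natAbs.Coprime (((p ^ r : ℕ) : ℤ)).natAbs := by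
              simpa [Int.natAbs_pow] using hcop
            have h3 : (x : ℤ) ≡ (y : ℤ) [ZMOD (Q' : ℤ) * ((p ^ r : ℕ) : ℤ)] :=
              (Int.modEq_and_modEq_iff_modEq_mul hcop').mp ⟨h1, h2⟩
            have h4 : (x : ℤ) % ((Q' * p ^ r : ℕ) : ℤ) = (y : ℤ) % ((Q' * p ^ r : ℕ) : ℤ) := by
              have : ((Q' * p ^ r : ℕ) : ℤ) = (Q' : ℤ) * ((p ^ r : ℕ) : ℤ) := by push_cast; ring
              rw [this]; exact h3
            exact_mod_cast h4
        -- real-valued bound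
        have hpr_pos : (0:ℝ) < (p : ℝ) ^ r := by
          have := hp.pos; positivity
        have hD_pos : (0:ℝ) < ((Q / Q' : ℕ) : ℝ) := by exact_mod_cast hD0
        have hcast : (((Q / Q') / p ^ r : ℕ) : ℝ) = ((Q / Q' : ℕ) : ℝ) / (p : ℝ) ^ r := by
          rw [Nat.cast_div hprD (by exact_mod_cast hpr_pos.ne')]
          push_cast
          ring
        have hstep : ((T i).card : ℝ) / ((Q / Q' : ℕ) : ℝ) ≤ 1 / (p : ℝ) ^ r := by
          have h5 : ((T i).card : ℝ) ≤ (((Q / Q') / p ^ r : ℕ) : ℝ) := by exact_mod_cast hcount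
          calc ((T i).card : ℝ) / ((Q / Q' : ℕ) : ℝ)
              ≤ (((Q / Q') / p ^ r : ℕ) : ℝ) / ((Q / Q' : ℕ) : ℝ) := by gcongr
            _ = 1 / (p : ℝ) ^ r := by
                rw [hcast]; field_simp
        refine hstep.trans ?_
        -- extract the single term
        have hmemr : r ∈ Icc 1 (Q.factorization p) := mem_Icc.mpr ⟨hr1, hrK⟩
        have hmemg : g ∈ Q'.divisors := Nat.mem_divisors.mpr ⟨hgQ', hQ'ne⟩
        have hinner : 1 / (p : ℝ) ^ r ≤ ∑ g' ∈ Q'.divisors,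
            if d i = g' * p ^ r ∧ c ≡ a i [ZMOD g'] then 1 / (p : ℝ) ^ r else 0 := by
          have := Finset.single_le_sum (f := fun g' =>
            if d i = g' * p ^ r ∧ c ≡ a i [ZMOD g'] then 1 / (p : ℝ) ^ r else 0)
            (fun g' _ => by
              by_cases h : d i = g' * p ^ r ∧ c ≡ a i [ZMOD g'] <;>
                simp only [h, if_true, if_false, if_pos, if_neg, not_false_iff] <;> positivity)
            hmemg
          simpa [hdeq.symm, hcompat] using this
        refine hinner.trans ?_
        exact Finset.single_le_sum (f := fun r' => ∑ g' ∈ Q'.divisors,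
            if d i = g' * p ^ r' ∧ c ≡ a i [ZMOD g'] then 1 / (p : ℝ) ^ r' else 0)
          (fun r' _ => Finset.sum_nonneg fun g' _ => by
            by_cases h : d i = g' * p ^ r' ∧ c ≡ a i [ZMOD g'] <;>
              simp only [h, if_true, if_false, if_pos, if_neg, not_false_iff] <;> positivity)
          hmemr
      · -- incompatible: T i is empty
        have hTe : T i = ∅ := by
          rw [hT, Finset.filter_eq_empty_iff]
          rintro x hx ⟨-, hxc, hxa⟩
          apply hcompat
          have h1 : (x : ℤ) ≡ c [ZMOD (g : ℤ)] :=
            Int.ModEq.of_dvd (by exact_mod_cast hgQ') hxc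
          have h2 : (x : ℤ) ≡ a i [ZMOD (g : ℤ)] :=
            Int.ModEq.of_dvd (by exact_mod_cast hgdvdd) hxa
          exact h1.symm.trans h2
        simp only [hTe, Finset.card_empty, Nat.cast_zero, zero_div]
        exact hsum_nonneg
    · -- P⁺(d i) ≠ p: T i is empty
      have hTe : T i = ∅ := by
        rw [hT, Finset.filter_eq_empty_iff]
        rintro x hx ⟨h, -⟩
        exact hPi h
      simp only [hTe, Finset.card_empty, Nat.cast_zero, zero_div]
      exact hsum_nonneg
  -- union bound
  have hsub : ((Finset.range Q).filter (fun x : ℕ =>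
      (x : ℤ) ≡ c [ZMOD Q'] ∧
      ∃ i : Fin n, (d i).primeFactors.sup id = p ∧ (x : ℤ) ≡ a i [ZMOD d i])) ⊆
      univ.biUnion T := by
    intro x hx
    obtain ⟨hxr, hxc, i, hi1, hi2⟩ := mem_filter.mp hx
    exact mem_biUnion.mpr ⟨i, mem_univ i, mem_filter.mpr ⟨hxr, hi1, hxc, hi2⟩⟩
  have hcard : (((Finset.range Q).filter (fun x : ℕ =>
      (x : ℤ) ≡ c [ZMOD Q'] ∧
      ∃ i : Fin n, (d i).primeFactors.sup id = p ∧ (x : ℤ) ≡ a i [ZMOD d i])).card : ℝ) ≤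
      ∑ i : Fin n, ((T i).card : ℝ) := by
    have h1 := (Finset.card_le_card hsub).trans Finset.card_biUnion_le
    exact_mod_cast h1
  have hD_pos : (0:ℝ) < ((Q / Q' : ℕ) : ℝ) := by exact_mod_cast hD0
  calc (((Finset.range Q).filter (fun x : ℕ =>
        (x : ℤ) ≡ c [ZMOD Q'] ∧
        ∃ i : Fin n, (d i).primeFactors.sup id = p ∧ (x : ℤ) ≡ a i [ZMOD d i])).card : ℝ) /
        ((Q / Q' : ℕ) : ℝ)
      ≤ (∑ i : Fin n, ((T i).card : ℝ)) / ((Q / Q' : ℕ) : ℝ) := by gcongr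
    _ = ∑ i : Fin n, ((T i).card : ℝ) / ((Q / Q' : ℕ) : ℝ) := Finset.sum_div _ _ _
    _ ≤ ∑ i : Fin n, ∑ r ∈ Icc 1 (Q.factorization p), ∑ g ∈ Q'.divisors,
        (if d i = g * p ^ r ∧ c ≡ a i [ZMOD g] then 1 / (p : ℝ) ^ r else 0) :=
        Finset.sum_le_sum fun i _ => key i
    _ = ∑ r ∈ Icc 1 (Q.factorization p), ∑ g ∈ Q'.divisors, ∑ i : Fin n,
        (if d i = g * p ^ r ∧ c ≡ a i [ZMOD g] then 1 / (p : ℝ) ^ r else 0) := by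
        rw [Finset.sum_comm]
        exact Finset.sum_congr rfl fun r _ => Finset.sum_comm
end

section
/- If s is a positive integer and c is sufficiently large (absolute), then with x = exp(c·log²(s+1)/log log(s+2)) and y = C·s³ for a suitable absolute constant C, one has u = log x / log y ≥ c'·log(s+1)/log log(s+2) for an absolute constant c' > 0, and s · ∑_{d > x, P⁺(d) ≤ y} 1/d < 1/2. -/
open Finset Real Nat


-- block cardinality bound
lemma block_card (j : ℕ) :
    j * ((Finset.Ico (2^j) (2^(j+1))).filter Nat.Prime).card ≤ 2^(j+2) := by
  set B := (Finset.Ico (2^j) (2^(j+1))).filter Nat.Prime with hB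
  have h1 : (2^j) ^ B.card ≤ ∏ p ∈ B, p := by
    rw [← Finset.prod_const]
    refine Finset.prod_le_prod' ?_
    intro p hp
    exact (Finset.mem_Ico.mp (Finset.mem_filter.mp hp).1).1
  have h2 : ∏ p ∈ B, p ≤ primorial (2^(j+1) - 1) := by
    refine Finset.prod_le_prod_of_subset_of_one_le' ?_ ?_
    · intro p hp
      simp only [hB, Finset.mem_filter, Finset.mem_Ico] at hp
      simp only [primorial, Finset.mem_filter, Finset.mem_range]
      refine ⟨?_, hp.2⟩
      have : 2 ^ (j+1) - 1 + 1 = 2^(j+1) := Nat.succ_pred_eq_of_pos (Nat.pow_pos (by norm_num))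
      omega
    · intro p hp _
      simp only [primorial, Finset.mem_filter] at hp
      exact hp.2.one_lt.le
  have h3 : primorial (2^(j+1) - 1) ≤ 4 ^ (2^(j+1)) :=
    le_trans (primorial_le_4_pow _) (Nat.pow_le_pow_right (by norm_num) (Nat.sub_le _ _))
  have h4 : (2:ℕ) ^ (j * B.card) ≤ 2 ^ (2^(j+2)) := by
    calc (2:ℕ) ^ (j * B.card) = (2^j) ^ B.card := by rw [pow_mul]
    _ ≤ 4 ^ (2^(j+1)) := le_trans h1 (le_trans h2 h3)
    _ = 2 ^ (2^(j+2)) := by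
        rw [show (4:ℕ) = 2^2 by norm_num, ← pow_mul, pow_succ]
        ring_nf
  exact (Nat.pow_le_pow_iff_right (by norm_num)).mp h4


lemma harmonic_le (K : ℕ) (hK : 1 ≤ K) :
    ∑ k ∈ Finset.Icc 1 K, (4:ℝ)/k ≤ 4 * (1 + Real.log K) := by
  induction K with
  | zero => omega
  | succ n ih =>
    rcases Nat.eq_or_lt_of_le hK with h | h
    · rw [← h]
      norm_num
    · have hn : 1 ≤ n := by omega
      have hIcc : Finset.Icc 1 (n+1) = insert (n+1) (Finset.Icc 1 n) := by
        ext a; simp [Finset.mem_Icc]; omega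
      rw [hIcc, Finset.sum_insert (by simp)]
      have h0 : (0:ℝ) < n := by exact_mod_cast hn
      have hlog : Real.log n + 1/(n+1) ≤ Real.log (n+1) := by
        have hx : (0:ℝ) < (n : ℝ)/(n+1) := by positivity
        have h1 := Real.log_le_sub_one_of_pos hx
        rw [Real.log_div (by positivity) (by positivity)] at h1
        have key : (n:ℝ)/(n+1) - 1 = -(1/(n+1)) := by field_simp; ring
        linarith [key ▸ h1]
      have hih := ih hn
      push_cast
      have h4 : (4:ℝ)/((n:ℝ)+1) = 4*(1/((n:ℝ)+1)) := by ring
      linarith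

lemma block_sum (j : ℕ) (hj : 1 ≤ j) :
    ∑ p ∈ (Finset.Ico (2^j) (2^(j+1))).filter Nat.Prime, (1:ℝ)/p ≤ 4 / j := by
  set B := (Finset.Ico (2^j) (2^(j+1))).filter Nat.Prime with hB
  have h1 : ∑ p ∈ B, (1:ℝ)/p ≤ ∑ _p ∈ B, (1:ℝ)/2^j := by
    refine Finset.sum_le_sum ?_
    intro p hp
    have h2 : (2:ℝ)^j ≤ p := by
      exact_mod_cast (Finset.mem_Ico.mp (Finset.mem_filter.mp hp).1).1
    have : (0:ℝ) < 2^j := by positivity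
    exact one_div_le_one_div_of_le this h2
  rw [Finset.sum_const, nsmul_eq_mul] at h1
  have h3 : (B.card : ℝ) * j ≤ 2^(j+2) := by exact_mod_cast (mul_comm j B.card ▸ block_card j)
  have hj' : (0:ℝ) < j := by exact_mod_cast hj
  have h4 : (B.card : ℝ) ≤ 2^(j+2)/j := by
    rw [le_div_iff₀ hj']; exact h3
  calc ∑ p ∈ B, (1:ℝ)/p ≤ B.card * (1/2^j) := h1
  _ ≤ (2^(j+2)/j) * (1/2^j) := by
      apply mul_le_mul_of_nonneg_right h4 (by positivity)
  _ = 4/j := by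
      rw [pow_add]
      field_simp
      ring

lemma primes_pow_sum (K : ℕ) :
    ∑ p ∈ Nat.primesBelow (2^(K+1)), (1:ℝ)/p ≤ ∑ k ∈ Finset.Icc 1 K, (4:ℝ)/k := by
  induction K with
  | zero =>
    have : Nat.primesBelow 2 = ∅ := by decide
    simp [this]
  | succ n ih =>
    have hle : (2:ℕ)^(n+1) ≤ 2^(n+2) := Nat.pow_le_pow_right (by norm_num) (by omega)
    have hsplit : Nat.primesBelow (2^(n+2)) =
        Nat.primesBelow (2^(n+1)) ∪ (Finset.Ico (2^(n+1)) (2^(n+2))).filter Nat.Prime := by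
      ext a
      simp only [Nat.primesBelow, Finset.mem_union, Finset.mem_filter, Finset.mem_range,
        Finset.mem_Ico]
      by_cases hp : a.Prime <;> simp [hp] <;> omega
    have hdisj : Disjoint (Nat.primesBelow (2^(n+1)))
        ((Finset.Ico (2^(n+1)) (2^(n+2))).filter Nat.Prime) := by
      unfold Nat.primesBelow
      rw [Finset.range_eq_Ico]
      exact Finset.disjoint_filter_filter (Finset.Ico_disjoint_Ico_consecutive 0 _ _)
    rw [hsplit, Finset.sum_union hdisj]
    have hIcc : Finset.Icc 1 (n+1) = insert (n+1) (Finset.Icc 1 n) := by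
      ext a; simp [Finset.mem_Icc]; omega
    rw [hIcc, Finset.sum_insert (by simp)]
    have := block_sum (n+1) (by omega)
    push_cast at this ⊢
    linarith

lemma mertens {N : ℕ} (hN : 2 ≤ N) :
    ∑ p ∈ N.primesBelow, (1:ℝ)/p ≤ 4 * Real.log (Real.log N) + 6 := by
  set K := Nat.log 2 N with hK
  have hK1 : 1 ≤ K := Nat.le_log_of_pow_le (by norm_num) (by simpa using hN)
  have hNlt : N < 2^(K+1) := Nat.lt_pow_succ_log_self (by norm_num) N
  have hKle : (2:ℕ)^K ≤ N := Nat.pow_log_le_self 2 (by omega)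
  have hsub : N.primesBelow ⊆ (2^(K+1)).primesBelow := by
    unfold Nat.primesBelow
    exact Finset.filter_subset_filter _ (Finset.range_subset_range.mpr (by omega))
  have h1 : ∑ p ∈ N.primesBelow, (1:ℝ)/p ≤ ∑ p ∈ (2^(K+1)).primesBelow, (1:ℝ)/(p:ℕ) := by
    refine Finset.sum_le_sum_of_subset_of_nonneg hsub ?_
    intro p _ _; positivity
  have h2 := (h1.trans (primes_pow_sum K)).trans (harmonic_le K hK1)
  -- now bound log K
  have hl2 := Real.log_two_gt_d9
  have hlogN : Real.log 2 * K ≤ Real.log N := by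
    calc Real.log 2 * K = Real.log ((2:ℝ)^K) := by rw [Real.log_pow]; ring
    _ ≤ Real.log N := Real.log_le_log (by positivity) (by exact_mod_cast hKle)
  have hKpos : (0:ℝ) < K := by exact_mod_cast hK1
  have hlogNpos : (0:ℝ) < Real.log N :=
    Real.log_pos (by exact_mod_cast Nat.one_lt_cast.mpr (by omega))
  have hlogK : Real.log K ≤ Real.log (Real.log N) - Real.log (Real.log 2) := by
    rw [← Real.log_div hlogNpos.ne' (Real.log_pos (by norm_num)).ne']
    refine Real.log_le_log hKpos ?_
    rw [le_div_iff₀ (by positivity)]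
    linarith [hlogN]
  have hll2 : Real.log (Real.log 2) ≥ -0.45 := by
    have hx : Real.log (Real.log 2) = -Real.log (Real.log 2)⁻¹ := by
      rw [Real.log_inv]; ring
    have h3 : Real.log (Real.log 2)⁻¹ ≤ (Real.log 2)⁻¹ - 1 :=
      Real.log_le_sub_one_of_pos (by positivity)
    have h4 : (Real.log 2)⁻¹ ≤ 1.45 := by
      rw [inv_le_comm₀ (by positivity) (by norm_num)]
      linarith
    rw [hx]; linarith
  linarith


noncomputable def rpowHom (β : ℝ) : ℕ →* ℝ where
  toFun n := (n:ℝ) ^ β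
  map_one' := by simp
  map_mul' m n := by
    push_cast
    exact Real.mul_rpow (by positivity) (by positivity)

lemma euler_bound (N : ℕ) {β : ℝ} (hβ : β < 0) (S : Finset ℕ)
    (hS : ∀ d ∈ S, d ∈ Nat.smoothNumbers N) :
    ∑ d ∈ S, (d:ℝ)^β ≤ ∏ p ∈ N.primesBelow, (1 - (p:ℝ)^β)⁻¹ := by
  have hnorm : ∀ {p : ℕ}, p.Prime → ‖rpowHom β p‖ < 1 := by
    intro p hp
    have h1 : (1:ℝ) < p := by exact_mod_cast hp.one_lt
    have h2 : (0:ℝ) < (p:ℝ)^β := Real.rpow_pos_of_pos (by linarith) β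
    have h3 : (p:ℝ)^β < 1 := Real.rpow_lt_one_of_one_lt_of_neg h1 hβ
    show ‖(p:ℝ)^β‖ < 1
    rw [Real.norm_eq_abs, abs_of_pos h2]
    exact h3
  obtain ⟨hsum, hprod⟩ :=
    EulerProduct.summable_and_hasSum_smoothNumbers_prod_primesBelow_geometric
      (f := rpowHom β) hnorm N
  have hsum' : Summable (fun m : N.smoothNumbers => (m:ℝ)^β) := hprod.summable
  have hind : Summable (Set.indicator (Nat.smoothNumbers N) (fun n : ℕ => (n:ℝ)^β)) :=
    summable_subtype_iff_indicator.mp hsum'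
  have htsum : ∑' n : ℕ, Set.indicator (Nat.smoothNumbers N) (fun n : ℕ => (n:ℝ)^β) n
      = ∏ p ∈ N.primesBelow, (1 - (p:ℝ)^β)⁻¹ := by
    rw [← _root_.tsum_subtype]
    exact hprod.tsum_eq
  calc ∑ d ∈ S, (d:ℝ)^β
      = ∑ d ∈ S, Set.indicator (Nat.smoothNumbers N) (fun n : ℕ => (n:ℝ)^β) d := by
        refine Finset.sum_congr rfl fun d hd => ?_
        rw [Set.indicator_of_mem (hS d hd)]
    _ ≤ ∑' n : ℕ, Set.indicator (Nat.smoothNumbers N) (fun n : ℕ => (n:ℝ)^β) n := by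
        refine Summable.sum_le_tsum S (fun n _ => Set.indicator_nonneg (fun m _ => by positivity) n) hind
    _ = _ := htsum

lemma factor_le {t : ℝ} (h0 : 0 < t) (h1 : t ≤ 3/4) : (1-t)⁻¹ ≤ Real.exp (4*t) := by
  have h2 : (0:ℝ) < 1 - t := by linarith
  have h3 : Real.log (1-t)⁻¹ ≤ (1-t)⁻¹ - 1 := Real.log_le_sub_one_of_pos (by positivity)
  have h4 : (1-t)⁻¹ - 1 = t/(1-t) := by field_simp; ring
  have h5 : t/(1-t) ≤ 4*t := by
    rw [div_le_iff₀ h2]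
    nlinarith
  calc (1-t)⁻¹ = Real.exp (Real.log (1-t)⁻¹) := (Real.exp_log (by positivity)).symm
  _ ≤ Real.exp (4*t) := Real.exp_le_exp.mpr (by linarith)

lemma rpow_factor {p : ℕ} (hp : 2 ≤ p) {δ : ℝ} (hδ0 : 0 < δ) (hδ : δ ≤ 1/2) :
    0 < (p:ℝ)^(δ-1) ∧ (p:ℝ)^(δ-1) ≤ 3/4 := by
  have hp0 : (0:ℝ) < p := by positivity
  have hp2 : (2:ℝ) ≤ p := by exact_mod_cast hp
  refine ⟨Real.rpow_pos_of_pos hp0 _, ?_⟩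
  have h1 : (p:ℝ)^(δ-1) ≤ (2:ℝ)^(δ-1) :=
    Real.rpow_le_rpow_of_nonpos (by norm_num) hp2 (by linarith)
  have h2 : (2:ℝ)^(δ-1) ≤ (2:ℝ)^(-(1:ℝ)/2) :=
    Real.rpow_le_rpow_of_exponent_le one_le_two (by linarith)
  have h3 : (2:ℝ)^(-(1:ℝ)/2) ≤ 3/4 := by
    have hs : (4:ℝ)/3 ≤ Real.sqrt 2 := by
      rw [show (4:ℝ)/3 = Real.sqrt ((4/3)^2) from (Real.sqrt_sq (by norm_num)).symm]
      exact Real.sqrt_le_sqrt (by norm_num)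
    have h2' : (2:ℝ)^(-(1:ℝ)/2) = (Real.sqrt 2)⁻¹ := by
      rw [show (-(1:ℝ)/2) = -(1/2) by ring, Real.rpow_neg (by norm_num : (0:ℝ) ≤ 2),
        ← Real.sqrt_eq_rpow]
    rw [h2']
    have hpos : (0:ℝ) < Real.sqrt 2 := Real.sqrt_pos.mpr (by norm_num)
    rw [inv_le_comm₀ hpos (by norm_num)]
    linarith
  linarith

lemma smooth_prod_le {N : ℕ} (hN : 2 ≤ N) {δ y : ℝ} (hδ0 : 0 < δ) (hδ : δ ≤ 1/2)
    (hy : (N:ℝ) - 1 ≤ y) :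
    ∏ p ∈ N.primesBelow, (1 - (p:ℝ)^(δ-1))⁻¹ ≤
      Real.exp (4 * y^δ * (4*Real.log (Real.log N) + 6)) := by
  have step1 : ∏ p ∈ N.primesBelow, (1 - (p:ℝ)^(δ-1))⁻¹ ≤
      ∏ p ∈ N.primesBelow, Real.exp (4*(p:ℝ)^(δ-1)) := by
    refine Finset.prod_le_prod ?_ ?_
    · intro p hp
      obtain ⟨h0, h1⟩ := rpow_factor (Nat.prime_of_mem_primesBelow hp).two_le hδ0 hδ
      have h2 : (0:ℝ) < 1 - (p:ℝ)^(δ-1) := by linarith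
      positivity
    · intro p hp
      obtain ⟨h0, h1⟩ := rpow_factor (Nat.prime_of_mem_primesBelow hp).two_le hδ0 hδ
      exact factor_le h0 h1
  rw [← Real.exp_sum] at step1
  refine step1.trans (Real.exp_le_exp.mpr ?_)
  have hterm : ∀ p ∈ N.primesBelow, 4*(p:ℝ)^(δ-1) ≤ 4 * y^δ * (1/p) := by
    intro p hp
    have hple : (p:ℝ) ≤ y := by
      have hlt : p + 1 ≤ N := Nat.lt_of_mem_primesBelow hp
      have : (p:ℝ) + 1 ≤ N := by exact_mod_cast hlt
      linarith
    have hp0 : (0:ℝ) < p := by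
      exact_mod_cast (Nat.prime_of_mem_primesBelow hp).pos
    have key : (p:ℝ)^(δ-1) = (p:ℝ)^δ * (p:ℝ)⁻¹ := by
      rw [← Real.rpow_neg_one (p:ℝ), ← Real.rpow_add hp0]
      ring_nf
    have h2 : (p:ℝ)^δ ≤ y^δ := Real.rpow_le_rpow (le_of_lt hp0) hple hδ0.le
    rw [key]
    have : (p:ℝ)^δ * (p:ℝ)⁻¹ ≤ y^δ * (p:ℝ)⁻¹ :=
      mul_le_mul_of_nonneg_right h2 (by positivity)
    calc 4*((p:ℝ)^δ * (p:ℝ)⁻¹) ≤ 4*(y^δ * (p:ℝ)⁻¹) := by linarith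
    _ = 4 * y^δ * (1/p) := by ring
  calc ∑ p ∈ N.primesBelow, 4*(p:ℝ)^(δ-1) ≤ ∑ p ∈ N.primesBelow, 4 * y^δ * (1/p) :=
        Finset.sum_le_sum hterm
  _ = 4 * y^δ * ∑ p ∈ N.primesBelow, (1/p:ℝ) := by rw [← Finset.mul_sum]
  _ ≤ 4 * y^δ * (4*Real.log (Real.log N) + 6) := by
      have hy0 : (0:ℝ) ≤ y := by
        have h2 : (2:ℝ) ≤ (N:ℝ) := by exact_mod_cast hN
        linarith
      have h0 : (0:ℝ) ≤ y^δ := Real.rpow_nonneg hy0 δ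
      exact mul_le_mul_of_nonneg_left (mertens hN) (by linarith)

lemma exp_three_ge17 : (18:ℝ) ≤ Real.exp 3 := by
  have he1 := Real.exp_one_gt_d9
  have h3 : Real.exp 3 = Real.exp 1 * Real.exp 1 * Real.exp 1 := by
    rw [← Real.exp_add, ← Real.exp_add]; norm_num
  nlinarith

lemma exp_ten_ge17 : (243:ℝ) ≤ Real.exp 10 := by
  have he2 : (3:ℝ) ≤ Real.exp 2 := by
    have := Real.add_one_le_exp (2:ℝ); linarith
  have he4 : (9:ℝ) ≤ Real.exp 4 := by
    have h4 : Real.exp 4 = Real.exp 2 * Real.exp 2 := by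
      rw [← Real.exp_add]; norm_num
    nlinarith [Real.exp_pos 2]
  have he8 : (81:ℝ) ≤ Real.exp 8 := by
    have h8 : Real.exp 8 = Real.exp 4 * Real.exp 4 := by
      rw [← Real.exp_add]; norm_num
    nlinarith [Real.exp_pos 4]
  have h10 : Real.exp 10 = Real.exp 8 * Real.exp 2 := by
    rw [← Real.exp_add]; norm_num
  nlinarith [Real.exp_pos 8, Real.exp_pos 2]




set_option maxHeartbeats 3200000 in
/-- There are absolute constants `C, c' > 0` and a threshold `c₀` such that for
all `c ≥ c₀` and every positive integer `s`, setting
`x = exp(c log²(s+1)/log log(s+2))` and `y = C s³`, one has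
`u = log x / log y ≥ c' log(s+1)/log log(s+2)`, and
`s ∑_{d > x, P⁺(d) ≤ y} 1/d < 1/2` (the sum over `y`-smooth integers `d > x`
being expressed via all of its finite partial sums). -/
theorem stmt17 :
    ∃ C : ℝ, 0 < C ∧ ∃ c' : ℝ, 0 < c' ∧ ∃ c₀ : ℝ, ∀ c : ℝ, c₀ ≤ c →
      ∀ s : ℕ, 1 ≤ s →
        (Real.log (Real.exp (c * Real.log (s + 1) ^ 2 / Real.log (Real.log (s + 2)))) /
            Real.log (C * (s : ℝ) ^ 3) ≥
          c' * Real.log (s + 1) / Real.log (Real.log (s + 2))) ∧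
        ∀ S : Finset ℕ,
          (∀ d ∈ S, Real.exp (c * Real.log (s + 1) ^ 2 / Real.log (Real.log (s + 2))) < d ∧
            ∀ p : ℕ, p.Prime → p ∣ d → (p : ℝ) ≤ C * (s : ℝ) ^ 3) →
          (s : ℝ) * ∑ d ∈ S, (1 : ℝ) / d < 1 / 2 := by
  refine ⟨Real.exp 9, Real.exp_pos 9, 1, one_pos, Real.exp 10, ?_⟩
  intro c hc s hs
  have hs1 : (1:ℝ) ≤ (s:ℝ) := by exact_mod_cast hs
  set A := Real.log ((s:ℝ) + 1) with hA
  set E := Real.log (Real.log ((s:ℝ) + 2)) with hE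
  set X := c * A^2 / E with hX
  set y := Real.exp 9 * (s:ℝ)^3 with hy
  set L := Real.log y with hL
  -- numeric facts
  have hl2 := Real.log_two_gt_d9
  have hl2' := Real.log_two_lt_d9
  have he1 := Real.exp_one_gt_d9
  have hA0 : Real.log 2 ≤ A := Real.log_le_log (by norm_num) (by linarith)
  have hApos : (0:ℝ) < A := by linarith
  have he1' : Real.exp 1 < 2.7182818286 := Real.exp_one_lt_d9
  have hlog3 : (1:ℝ) < Real.log ((s:ℝ) + 2) := by
    have h3 : Real.exp 1 < (s:ℝ) + 2 := by linarith
    calc (1:ℝ) = Real.log (Real.exp 1) := (Real.log_exp 1).symm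
    _ < Real.log ((s:ℝ)+2) := Real.log_lt_log (Real.exp_pos 1) h3
  have hEpos : (0:ℝ) < E := Real.log_pos hlog3
  have hlogs0 : (0:ℝ) ≤ Real.log s := Real.log_nonneg hs1
  have hlogsA : Real.log s ≤ A := Real.log_le_log (by linarith) (by linarith)
  have hLval : L = 9 + 3 * Real.log s := by
    rw [hL, hy, Real.log_mul (Real.exp_ne_zero 9) (by positivity), Real.log_exp,
      Real.log_pow]
    push_cast; ring
  have hL9 : (9:ℝ) ≤ L := by rw [hLval]; linarith
  have hLpos : (0:ℝ) < L := by linarith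
  have hLA : L ≤ 16 * A := by rw [hLval]; linarith
  have hcpos : (0:ℝ) < c := lt_of_lt_of_le (Real.exp_pos 10) hc
  have hXpos : (0:ℝ) < X := by
    rw [hX]; exact div_pos (by positivity) hEpos
  have he10 : (243:ℝ) ≤ Real.exp 10 := exp_ten_ge17
  have hc243 : (243:ℝ) ≤ c := by linarith
  have hc16 : (16:ℝ) ≤ c := by linarith
  have hXE : X * E = c * A^2 := by rw [hX]; field_simp
  clear_value A E X y L
  constructor
  · -- part 1
    rw [Real.log_exp]
    rw [ge_iff_le, div_le_div_iff₀ hEpos hLpos, hXE]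
    have h1 : A * L ≤ A * (16*A) := mul_le_mul_of_nonneg_left hLA hApos.le
    have h2 : 16*(A*A) ≤ c*(A*A) := by
      refine mul_le_mul_of_nonneg_right hc16 (by positivity)
    calc 1 * A * L = A * L := by ring
    _ ≤ A * (16*A) := h1
    _ = 16 * (A*A) := by ring
    _ ≤ c * (A*A) := h2
    _ = c * A^2 := by ring
  · -- part 2
    intro S hSpec
    -- setup N
    set N := Nat.floor y + 1 with hNdef
    have hy1 : (1:ℝ) ≤ y := by
      rw [hy]
      have h1 : (1:ℝ) ≤ Real.exp 9 := Real.one_le_exp (by norm_num)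
      have h2 : (1:ℝ) ≤ (s:ℝ)^3 := one_le_pow₀ hs1
      have h3 := mul_le_mul h1 h2 zero_le_one (Real.exp_pos 9).le
      linarith
    have hypos : (0:ℝ) < y := by linarith
    have hN2 : 2 ≤ N := by
      have h2y : (2:ℝ) ≤ y := by
        rw [hy]
        have h2 : (1:ℝ) ≤ (s:ℝ)^3 := one_le_pow₀ hs1
        have h9 : Real.exp 2 ≤ Real.exp 9 := Real.exp_le_exp.mpr (by norm_num)
        have h9' : (3:ℝ) ≤ Real.exp 2 := by
          have := Real.add_one_le_exp (2:ℝ); linarith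
        have h3 := mul_le_mul_of_nonneg_left h2 (Real.exp_pos 9).le
        have h4 : Real.exp 9 * 1 = Real.exp 9 := mul_one _
        linarith
      have : (2:ℕ) ≤ Nat.floor y := Nat.le_floor (by exact_mod_cast h2y)
      omega
    have hN1 : (1:ℝ) < (N:ℝ) := by
      have : (2:ℕ) ≤ N := hN2
      exact_mod_cast Nat.lt_of_lt_of_le one_lt_two this
    have hNy : (N:ℝ) - 1 ≤ y := by
      have h1 := Nat.floor_le hypos.le
      have h2 : (N:ℝ) = (Nat.floor y : ℝ) + 1 := by rw [hNdef]; push_cast; ring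
      linarith
    have hsmooth : ∀ d ∈ S, d ∈ Nat.smoothNumbers N := by
      intro d hd
      obtain ⟨hdx, hdp⟩ := hSpec d hd
      have hd0 : d ≠ 0 := by
        rintro rfl
        have : (0:ℝ) < Real.exp X := Real.exp_pos X
        push_cast at hdx
        linarith
      refine Nat.mem_smoothNumbers.mpr ⟨hd0, ?_⟩
      intro p hp
      have hpp : p.Prime := Nat.prime_of_mem_primeFactorsList hp
      have hpd : p ∣ d := Nat.dvd_of_mem_primeFactorsList hp
      have hple : (p:ℝ) ≤ y := hdp p hpp hpd
      have hfl : p ≤ Nat.floor y := Nat.le_floor hple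
      omega
    -- M' and mertens bound
    set M' := 4*E + 18 with hM'def
    have hM'pos : (0:ℝ) < M' := by rw [hM'def]; linarith
    have hlogNpos : (0:ℝ) < Real.log N := Real.log_pos hN1
    have hNle : (N:ℝ) ≤ 2*y := by linarith
    have hlogN_le : Real.log N ≤ L + 1 := by
      calc Real.log N ≤ Real.log (2*y) := Real.log_le_log (by linarith) hNle
      _ = Real.log 2 + L := by rw [Real.log_mul (by norm_num) hypos.ne', hL]
      _ ≤ L + 1 := by linarith
    have hlogA_le : Real.log A ≤ E := by
      rw [hE]
      refine Real.log_le_log hApos ?_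
      rw [hA]
      exact Real.log_le_log (by linarith) (by linarith)
    have hL1_le : L + 1 ≤ 18*A := by
      rw [hLval]
      linarith
    have hlog18 : Real.log 18 ≤ 3 := by
      calc Real.log 18 ≤ Real.log (Real.exp 3) := Real.log_le_log (by norm_num) exp_three_ge17
      _ = 3 := Real.log_exp 3
    have hloglogN : Real.log (Real.log N) ≤ E + 3 := by
      have hlA : Real.log N ≤ 18*A := by linarith
      calc Real.log (Real.log N) ≤ Real.log (18*A) := Real.log_le_log hlogNpos hlA
      _ = Real.log 18 + Real.log A := Real.log_mul (by norm_num) hApos.ne'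
      _ ≤ E + 3 := by linarith
    have hmert_M' : 4*Real.log (Real.log N) + 6 ≤ M' := by rw [hM'def]; linarith
    -- the master bound
    have hbound : ∀ δ : ℝ, 0 < δ → δ ≤ 1/2 →
        (s:ℝ) * ∑ d ∈ S, (1:ℝ)/d ≤
          Real.exp (Real.log s - δ*X + 4*Real.exp (δ*L)*M') := by
      intro δ hδ0 hδh
      have hβ : δ - 1 < 0 := by linarith
      have hstep1 : ∑ d ∈ S, (1:ℝ)/d ≤ Real.exp (-(δ*X)) * ∑ d ∈ S, (d:ℝ)^(δ-1) := by
        rw [Finset.mul_sum]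
        refine Finset.sum_le_sum ?_
        intro d hd
        obtain ⟨hdx, -⟩ := hSpec d hd
        have hd0 : (0:ℝ) < d := lt_trans (Real.exp_pos X) hdx
        have hsplit : (d:ℝ)^(δ-1) * (d:ℝ)^(-δ) = 1/(d:ℝ) := by
          rw [← Real.rpow_add hd0, show (δ-1) + -δ = -1 by ring, Real.rpow_neg_one, one_div]
        have hdδ : (d:ℝ)^(-δ) ≤ Real.exp (-(δ*X)) := by
          have h1 : (d:ℝ)^(-δ) ≤ Real.exp X ^ (-δ) :=
            Real.rpow_le_rpow_of_nonpos (Real.exp_pos X) hdx.le (by linarith)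
          have h2 : Real.exp X ^ (-δ) = Real.exp (-(δ*X)) := by
            rw [← Real.exp_mul]; ring_nf
          linarith [h2 ▸ h1]
        calc (1:ℝ)/(d:ℝ) = (d:ℝ)^(δ-1) * (d:ℝ)^(-δ) := hsplit.symm
        _ ≤ (d:ℝ)^(δ-1) * Real.exp (-(δ*X)) :=
            mul_le_mul_of_nonneg_left hdδ (Real.rpow_nonneg hd0.le _)
        _ = Real.exp (-(δ*X)) * (d:ℝ)^(δ-1) := by ring
      have hstep2 : ∑ d ∈ S, (d:ℝ)^(δ-1) ≤
          ∏ p ∈ N.primesBelow, (1 - (p:ℝ)^(δ-1))⁻¹ := euler_bound N hβ S hsmooth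
      have hstep3 := smooth_prod_le hN2 hδ0 hδh hNy
      have hyδ : y^(δ:ℝ) = Real.exp (δ*L) := by
        rw [Real.rpow_def_of_pos hypos, hL, mul_comm]
      have hstep4 : 4 * y^(δ:ℝ) * (4*Real.log (Real.log N) + 6) ≤ 4*Real.exp (δ*L)*M' := by
        rw [hyδ]
        exact mul_le_mul_of_nonneg_left hmert_M' (by positivity)
      have hsum2 : ∑ d ∈ S, (d:ℝ)^(δ-1) ≤ Real.exp (4*Real.exp (δ*L)*M') :=
        hstep2.trans (hstep3.trans (Real.exp_le_exp.mpr hstep4))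
      have hsumnn : (0:ℝ) ≤ ∑ d ∈ S, (1:ℝ)/d := by
        refine Finset.sum_nonneg fun d _ => by positivity
      calc (s:ℝ) * ∑ d ∈ S, (1:ℝ)/d
          ≤ (s:ℝ) * (Real.exp (-(δ*X)) * Real.exp (4*Real.exp (δ*L)*M')) := by
            refine mul_le_mul_of_nonneg_left ?_ (by positivity)
            exact hstep1.trans (mul_le_mul_of_nonneg_left hsum2 (Real.exp_pos _).le)
      _ = Real.exp (Real.log s) * (Real.exp (-(δ*X)) * Real.exp (4*Real.exp (δ*L)*M')) := by
            rw [Real.exp_log (by linarith : (0:ℝ) < (s:ℝ))]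
      _ = Real.exp (Real.log s - δ*X + 4*Real.exp (δ*L)*M') := by
            rw [← Real.exp_add, ← Real.exp_add]
            congr 1
            ring
    -- logW lower bound
    set W := X/(4*L*M') with hWdef
    have hWpos : (0:ℝ) < W := div_pos hXpos (by positivity)
    have hlogX : Real.log X = Real.log c + 2*Real.log A - Real.log E := by
      rw [hX, Real.log_div (mul_ne_zero hcpos.ne' (pow_ne_zero 2 hApos.ne')) hEpos.ne',
        Real.log_mul hcpos.ne' (pow_ne_zero 2 hApos.ne'), Real.log_pow]
      push_cast; ring
    have hlogW : Real.log W = Real.log X - (Real.log 4 + Real.log L + Real.log M') := by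
      rw [hWdef, Real.log_div hXpos.ne' (by positivity),
        Real.log_mul (by positivity) hM'pos.ne', Real.log_mul (by norm_num) hLpos.ne']
    have hlogc : (10:ℝ) ≤ Real.log c := by
      calc (10:ℝ) = Real.log (Real.exp 10) := (Real.log_exp 10).symm
      _ ≤ Real.log c := Real.log_le_log (Real.exp_pos 10) hc
    have hlog4 : Real.log 4 ≤ 1.39 := by
      rw [show (4:ℝ) = 2^2 by norm_num, Real.log_pow]
      push_cast; linarith
    have hlog16 : Real.log 16 ≤ 2.78 := by
      rw [show (16:ℝ) = 2^4 by norm_num, Real.log_pow]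
      push_cast; linarith
    have hlogL : Real.log L ≤ 2.78 + Real.log A := by
      calc Real.log L ≤ Real.log (16*A) := Real.log_le_log hLpos hLA
      _ = Real.log 16 + Real.log A := Real.log_mul (by norm_num) hApos.ne'
      _ ≤ 2.78 + Real.log A := by linarith
    have hlogM' : Real.log M' ≤ 3 + E/4 := by
      have h0 : (1:ℝ) + E/4 ≤ Real.exp (E/4) := by
        have := Real.add_one_le_exp (E/4); linarith
      have h1 : M' ≤ 18 * Real.exp (E/4) := by
        have h2 : 18*(1 + E/4) ≤ 18 * Real.exp (E/4) :=
          mul_le_mul_of_nonneg_left h0 (by norm_num)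
        rw [hM'def]; linarith
      calc Real.log M' ≤ Real.log (18*Real.exp (E/4)) := Real.log_le_log hM'pos h1
      _ = Real.log 18 + E/4 := by
          rw [Real.log_mul (by norm_num) (Real.exp_ne_zero _), Real.log_exp]
      _ ≤ 3 + E/4 := by linarith
    have hlogE : Real.log E ≤ E/2 - 0.3 := by
      have h1 : Real.log (E/2) ≤ E/2 - 1 := Real.log_le_sub_one_of_pos (by positivity)
      have h2 : Real.log E = Real.log (E/2) + Real.log 2 := by
        rw [← Real.log_mul (by positivity) (by norm_num), div_mul_cancel₀ _ (by norm_num : (2:ℝ) ≠ 0)]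
      linarith
    have hlogA_lb : E - 0.7 ≤ Real.log A := by
      have hsq : ((s:ℝ)+2) ≤ ((s:ℝ)+1)^2 := by
        have h1 : (1:ℝ) ≤ (s:ℝ)^2 := one_le_pow₀ hs1
        calc (s:ℝ)+2 ≤ (s:ℝ)^2 + 2*(s:ℝ) + 1 := by linarith
        _ = ((s:ℝ)+1)^2 := by ring
      have h1 : Real.log ((s:ℝ)+2) ≤ 2*A := by
        calc Real.log ((s:ℝ)+2) ≤ Real.log (((s:ℝ)+1)^2) :=
              Real.log_le_log (by linarith) hsq
        _ = 2*A := by rw [Real.log_pow, hA]; push_cast; ring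
      have h2 : E ≤ Real.log (2*A) := by
        rw [hE]
        exact Real.log_le_log (by linarith) h1
      have h3 : Real.log (2*A) = Real.log 2 + Real.log A := Real.log_mul (by norm_num) hApos.ne'
      linarith
    have hlogW_lb : 2 + E/4 ≤ Real.log W := by
      rw [hlogW, hlogX]
      linarith
    have hhalf : Real.exp (-Real.log 2) = 1/2 := by
      rw [Real.exp_neg, Real.exp_log (by norm_num : (0:ℝ) < 2)]
      norm_num
    have h4WM : 4 * W * M' = X / L := by
      rw [hWdef]; field_simp
    by_cases hcase : Real.log W ≤ L/2
    · -- main case: δ = log W / L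
      have hlogWpos : (0:ℝ) < Real.log W := by linarith
      have hδ0 : 0 < Real.log W / L := div_pos hlogWpos hLpos
      have hδh : Real.log W / L ≤ 1/2 := by
        rw [div_le_iff₀ hLpos]; linarith
      have hb := hbound (Real.log W / L) hδ0 hδh
      have hδL : (Real.log W / L) * L = Real.log W := by field_simp
      have hexpδL : Real.exp ((Real.log W / L)*L) = W := by rw [hδL, Real.exp_log hWpos]
      have hδX : (Real.log W / L) * X = (X/L) * Real.log W := by ring
      have hu : (0:ℝ) < X/L := div_pos hXpos hLpos
      have huE : c*A ≤ 16*(E*(X/L)) := by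
        have h1 : 16*(E*(X/L)) = 16*c*A^2/L := by rw [hX]; field_simp
        rw [h1, le_div_iff₀ hLpos]
        calc c*A*L ≤ c*A*(16*A) := mul_le_mul_of_nonneg_left hLA (by positivity)
        _ = 16*c*A^2 := by ring
      have hfinal_exp : Real.log s - (Real.log W / L)*X + 4*Real.exp ((Real.log W / L)*L)*M'
          < -Real.log 2 := by
        rw [hexpδL, hδX, h4WM]
        -- goal : log s - (X/L)*log W + X/L < - log 2
        have hm1 : (X/L) * (1 + E/4) ≤ (X/L) * (Real.log W - 1) :=
          mul_le_mul_of_nonneg_left (by linarith) hu.le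
        have hexpand : (X/L) * (1 + E/4) = X/L + (E*(X/L))/4 := by ring
        have hexpand2 : (X/L) * (Real.log W - 1) = (X/L)*Real.log W - X/L := by ring
        have hcA : 3*A < c*A/64 := by
          have h1 : 0 < A*(c/64 - 3) := mul_pos hApos (by linarith)
          have h2 : A*(c/64 - 3) = c*A/64 - 3*A := by ring
          linarith
        have hlogsle : Real.log s + Real.log 2 ≤ 3*A := by linarith
        linarith
      calc (s:ℝ) * ∑ d ∈ S, (1:ℝ)/d
          ≤ _ := hb
      _ < Real.exp (-Real.log 2) := Real.exp_lt_exp.mpr hfinal_exp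
      _ = 1/2 := hhalf
    · -- large case: δ = 1/2
      have hb := hbound (1/2) (by norm_num) le_rfl
      have hWle : Real.exp ((1/2:ℝ)*L) ≤ W := by
        rw [← Real.exp_log hWpos]
        refine Real.exp_le_exp.mpr ?_
        have := not_le.mp hcase
        linarith
      have hcost : 4*Real.exp ((1/2:ℝ)*L)*M' ≤ X/L := by
        calc 4*Real.exp ((1/2:ℝ)*L)*M' ≤ 4*W*M' := by
              refine mul_le_mul_of_nonneg_right ?_ hM'pos.le
              linarith
        _ = X/L := h4WM
      have hXL : X/L ≤ X/9 := by
        refine div_le_div_of_nonneg_left hXpos.le (by norm_num) hL9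
      have hAE : E ≤ A := by
        have h1 : Real.log ((s:ℝ)+2) ≤ (s:ℝ)+1 := by
          have := Real.log_le_sub_one_of_pos (show (0:ℝ) < (s:ℝ)+2 by linarith)
          linarith
        rw [hE, hA]
        exact Real.log_le_log (by linarith) h1
      have hXcA : c*A ≤ X := by
        rw [hX, le_div_iff₀ hEpos]
        calc c*A*E ≤ c*A*A := mul_le_mul_of_nonneg_left hAE (by positivity)
        _ = c*A^2 := by ring
      have h243A : 243*A ≤ X := by
        have : 243*A ≤ c*A := mul_le_mul_of_nonneg_right hc243 hApos.le
        linarith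
      have hfinal_exp : Real.log s - (1/2:ℝ)*X + 4*Real.exp ((1/2:ℝ)*L)*M' < -Real.log 2 := by
        have hlogsle : Real.log s + Real.log 2 ≤ 3*A := by linarith
        linarith
      calc (s:ℝ) * ∑ d ∈ S, (1:ℝ)/d
          ≤ _ := hb
      _ < Real.exp (-Real.log 2) := Real.exp_lt_exp.mpr hfinal_exp
      _ = 1/2 := hhalf
end
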